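/- arXiv:1811.01654 — 2 statements merged into one kernel-verified Lean document; each statement's English description precedes it below -/
import Mathlib

section
/- For all G ∈ A and nonzero monic H ∈ A, Σ over monic D with D ∥ H of η*(G,D) equals |H| if H ∣ G, and equals 0 otherwise. -/
open Polynomial UniqueFactorizationMonoid

variable (p : ℕ) [Fact p.Prime] (F : Type) [Field F] [Fintype F] [DecidableEq F]
  [Algebra (ZMod p) F]

/-- The absolute value `|G| = q ^ deg G` of a polynomial over `𝔽_q`. -/
def anorm (G : Polynomial F) : ℕ := Fintype.card F ^ G.natDegree

/-- `t_H(A')`: the coefficient of `T^(m-1)` in the remainder of `A'` upon division by `H`,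
where `m = deg H`. -/
noncomputable def tmap (H A' : Polynomial F) : F := (A' % H).coeff (H.natDegree - 1)

/-- The additive character `E(G,H)(D) = exp(2πi · tr(t_H(G·D)) / p)`. -/
noncomputable def echar (G H D : Polynomial F) : ℂ :=
  Complex.exp (2 * Real.pi * Complex.I *
    ((Algebra.trace (ZMod p) F (tmap F H (G * D))).val : ℂ) / (p : ℂ))

open scoped Classical in
/-- `ω(G)`: the number of distinct monic irreducible divisors of `G`. -/
noncomputable def omega (G : Polynomial F) : ℕ := (normalizedFactors G).toFinset.card

open scoped Classical in
/-- The Möbius function on `𝔽_q[T]`. -/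
noncomputable def mu (G : Polynomial F) : ℤ :=
  if Squarefree G then (-1) ^ omega F G else 0

/-- The polynomial Ramanujan sum `η(G,H)`: the sum of `E(G,H)(D)` over a complete residue
system `D` modulo `H` with `(D,H) = 1`. -/
noncomputable def eta (G H : Polynomial F) : ℂ :=
  ∑' D : {D : Polynomial F // D.degree < H.degree ∧ IsCoprime D H}, echar p F G H D.1

open scoped Classical in
/-- The unitary gcd `(G,H)_*`: the monic polynomial of highest degree dividing `G` and
unitarily dividing `H`. -/
noncomputable def ugcd (G H : Polynomial F) : Polynomial F :=
  ∏ P ∈ (normalizedFactors H).toFinset,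
    if P ^ (normalizedFactors H).count P ∣ G then P ^ (normalizedFactors H).count P else 1

/-- `μ*(G) = (-1)^(ω(G))`. -/
noncomputable def muStar (G : Polynomial F) : ℤ := (-1) ^ omega F G

/-- The unitary polynomial Ramanujan sum `η*(G,H)`: the sum of `E(G,H)(D)` over a complete
residue system `D` modulo `H` with `(D,H)_* = 1`. -/
noncomputable def etaStar (G H : Polynomial F) : ℂ :=
  ∑' D : {D : Polynomial F // D.degree < H.degree ∧ ugcd F D H = 1}, echar p F G H D.1

set_option linter.unusedSectionVars false
set_option linter.unusedVariables false

noncomputable def psi (a : ZMod p) : ℂ :=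
  Complex.exp (2 * Real.pi * Complex.I * (a.val : ℂ) / (p : ℂ))

lemma psi_zero : psi p 0 = 1 := by simp [psi]

lemma psi_add (a b : ZMod p) : psi p (a + b) = psi p a * psi p b := by
  have hp : (p : ℂ) ≠ 0 := by exact_mod_cast (Fact.out : p.Prime).ne_zero
  have : NeZero p := ⟨(Fact.out : p.Prime).ne_zero⟩
  rw [psi, psi, psi, ← Complex.exp_add]
  set k : ℕ := (a.val + b.val) / p with hk
  have h2 : a.val + b.val = (a + b).val + p * k := by
    rw [ZMod.val_add]; exact (Nat.mod_add_div _ _).symm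
  have key : ((a.val : ℂ) + (b.val : ℂ)) = ((a+b).val : ℂ) + (p : ℂ) * (k : ℂ) := by
    exact_mod_cast congrArg (Nat.cast : ℕ → ℂ) h2
  have e1 : 2 * Real.pi * Complex.I * (a.val : ℂ) / p + 2 * Real.pi * Complex.I * (b.val : ℂ) / p
      = 2 * Real.pi * Complex.I * ((a+b).val : ℂ) / p + (k : ℂ) * (2 * Real.pi * Complex.I) := by
    have l1 : 2 * Real.pi * Complex.I * (a.val : ℂ) / p + 2 * Real.pi * Complex.I * (b.val : ℂ) / p
        = 2 * Real.pi * Complex.I * ((a.val : ℂ) + (b.val : ℂ)) / p := by ring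
    rw [l1, key, mul_add, add_div]
    congr 1
    rw [mul_comm (p : ℂ) (k : ℂ), ← mul_assoc, mul_comm (2 * Real.pi * Complex.I) (k:ℂ), mul_assoc]
    rw [mul_div_assoc, mul_div_assoc, div_self hp, mul_one]
  rw [e1, Complex.exp_add]
  have : Complex.exp ((k : ℂ) * (2 * Real.pi * Complex.I)) = 1 := by
    exact_mod_cast Complex.exp_int_mul_two_pi_mul_I (k : ℤ)
  rw [this, mul_one]

lemma psi_ne_one {a : ZMod p} (ha : a ≠ 0) : psi p a ≠ 1 := by
  have hp : (p : ℂ) ≠ 0 := by exact_mod_cast (Fact.out : p.Prime).ne_zero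
  have hnz : NeZero p := ⟨(Fact.out : p.Prime).ne_zero⟩
  intro h
  rw [psi, Complex.exp_eq_one_iff] at h
  obtain ⟨n, hn⟩ := h
  have hπ : (2 * Real.pi * Complex.I : ℂ) ≠ 0 := by
    simp [Real.pi_ne_zero, Complex.I_ne_zero]
  have hc : (2 * Real.pi * Complex.I) * (a.val : ℂ) = (2 * Real.pi * Complex.I) * ((n : ℂ) * p) := by
    have hn' := (div_eq_iff hp).mp hn
    linear_combination hn'
  have hval : (a.val : ℂ) = ((n * p : ℤ) : ℂ) := by
    have := mul_left_cancel₀ hπ hc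
    push_cast
    exact this
  have hvz : (a.val : ℤ) = n * p := by exact_mod_cast hval
  have hdvd : (p : ℤ) ∣ (a.val : ℤ) := ⟨n, by linarith [hvz]⟩
  have : (p : ℕ) ∣ a.val := by exact_mod_cast hdvd
  have hlt := ZMod.val_lt a
  have h0 : a.val = 0 := Nat.eq_zero_of_dvd_of_lt this hlt
  exact ha ((ZMod.val_eq_zero a).mp h0)

lemma echar_eq (G H D : Polynomial F) :
    echar p F G H D = psi p (Algebra.trace (ZMod p) F (tmap F H (G * D))) := rfl

lemma tmap_eq (H X : Polynomial F) (hH : H.Monic) :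
    tmap F H X = (X %ₘ H).coeff (H.natDegree - 1) := by
  rw [tmap, modByMonic_eq_mod _ hH]

lemma tmap_add (H X Y : Polynomial F) (hH : H.Monic) :
    tmap F H (X + Y) = tmap F H X + tmap F H Y := by
  rw [tmap_eq _ _ _ hH, tmap_eq _ _ _ hH, tmap_eq _ _ _ hH, add_modByMonic, coeff_add]

lemma tmap_smul (H X : Polynomial F) (hH : H.Monic) (c : F) :
    tmap F H (C c * X) = c * tmap F H X := by
  rw [tmap_eq _ _ _ hH, tmap_eq _ _ _ hH, ← smul_eq_C_mul, smul_modByMonic, coeff_smul,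
    smul_eq_mul]

lemma tmap_zero_of_dvd (H X : Polynomial F) (hH : H.Monic) (h : H ∣ X) :
    tmap F H X = 0 := by
  rw [tmap_eq _ _ _ hH, (modByMonic_eq_zero_iff_dvd hH).2 h, coeff_zero]

lemma echar_add (G H D₁ D₂ : Polynomial F) (hH : H.Monic) :
    echar p F G H (D₁ + D₂) = echar p F G H D₁ * echar p F G H D₂ := by
  rw [echar_eq, echar_eq, echar_eq, mul_add, tmap_add _ _ _ _ hH, map_add, psi_add]

lemma echar_one_of_dvd (G H D : Polynomial F) (hH : H.Monic) (h : H ∣ G * D) :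
    echar p F G H D = 1 := by
  rw [echar_eq, tmap_zero_of_dvd _ _ _ hH h, map_zero, psi_zero]

/-- Equiv between polynomials of degree < n and `Fin n → F`. -/
noncomputable def degLTEquiv (n : ℕ) :
    {A : Polynomial F // A.degree < (n : WithBot ℕ)} ≃ (Fin n → F) :=
  (Equiv.subtypeEquivRight (fun A => (mem_degreeLT (R := F)).symm)).trans
    (degreeLTEquiv F n).toEquiv

lemma finite_deg_lt (q : Polynomial F → Prop) (n : ℕ)
    (h : ∀ A, q A → A.degree < (n : WithBot ℕ)) : Finite {A : Polynomial F // q A} := by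
  have : Finite {A : Polynomial F // A.degree < (n : WithBot ℕ)} :=
    Finite.of_equiv _ (degLTEquiv F n).symm
  exact Finite.of_injective (fun A => (⟨A.1, h A.1 A.2⟩ :
    {A : Polynomial F // A.degree < (n : WithBot ℕ)}))
    (fun a b hab => Subtype.ext (by simpa using congrArg Subtype.val hab))

lemma exists_nontrivial (G H : Polynomial F) (hH : H.Monic) (h : ¬ H ∣ G) :
    ∃ A₀ : Polynomial F, A₀.degree < H.degree ∧
      Algebra.trace (ZMod p) F (tmap F H (G * A₀)) ≠ 0 := by
  have hH0 : H ≠ 0 := hH.ne_zero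
  set m := H.natDegree with hm
  have hm1 : 1 ≤ m := by
    by_contra hc
    push_neg at hc
    interval_cases m
    · exact h (by rw [hH.natDegree_eq_zero.1 hm.symm]; exact one_dvd G)
  set r := G %ₘ H with hr
  have hr0 : r ≠ 0 := fun h0 => h ((modByMonic_eq_zero_iff_dvd hH).1 h0)
  have hrd : r.degree < H.degree := degree_modByMonic_lt G hH
  set d := r.natDegree with hd
  have hdm : d < m := natDegree_lt_natDegree hr0 hrd
  set k := m - 1 - d with hk
  have hdk : d + k = m - 1 := by omega
  have hmod : (r * X ^ k) %ₘ H = r * X ^ k := by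
    rw [modByMonic_eq_self_iff hH]
    rw [degree_mul, degree_X_pow, degree_eq_natDegree hr0, degree_eq_natDegree hH0]
    rw [← Nat.cast_add, hdk]
    exact_mod_cast (by omega : m - 1 < m)
  have ht : tmap F H (G * X ^ k) = r.coeff d := by
    have hGr : G * X ^ k = r * X ^ k + H * (G /ₘ H * X ^ k) := by
      conv_lhs => rw [← modByMonic_add_div G H]
      ring
    rw [hGr, tmap_add _ _ _ _ hH, tmap_zero_of_dvd _ _ _ hH (dvd_mul_right _ _), add_zero]
    rw [tmap_eq _ _ _ hH, hmod, ← hm, ← hdk, coeff_mul_X_pow]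
  have htne : tmap F H (G * X ^ k) ≠ 0 := by
    rw [ht, ← Polynomial.leadingCoeff]
    exact leadingCoeff_ne_zero.2 hr0
  have h1 : FiniteDimensional (ZMod p) F := Module.Finite.of_finite
  obtain ⟨y, hy⟩ := Algebra.trace_surjective (ZMod p) F 1
  set t := tmap F H (G * X ^ k) with htt
  refine ⟨C (y * t⁻¹) * X ^ k, ?_, ?_⟩
  · have h2 : (C (y * t⁻¹) * X ^ k).degree ≤ (k : WithBot ℕ) := by
      calc (C (y * t⁻¹) * X ^ k).degree ≤ (C (y * t⁻¹)).degree + (X ^ k : Polynomial F).degree :=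
            degree_mul_le _ _
        _ ≤ 0 + (k : WithBot ℕ) := by
            rw [degree_X_pow]
            exact add_le_add_left degree_C_le _
        _ = (k : WithBot ℕ) := zero_add _
    refine lt_of_le_of_lt h2 ?_
    rw [degree_eq_natDegree hH0]
    exact_mod_cast (by omega : k < m)
  · have : G * (C (y * t⁻¹) * X ^ k) = C (y * t⁻¹) * (G * X ^ k) := by ring
    rw [this, tmap_smul _ _ _ hH, ← htt, mul_assoc, inv_mul_cancel₀ htne, mul_one, hy]
    exact one_ne_zero

open scoped Classical in
lemma tsum_echar_full (G H : Polynomial F) (hH : H.Monic) (hH0 : H ≠ 0) :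
    ∑' A : {A : Polynomial F // A.degree < H.degree}, echar p F G H A.1
      = if H ∣ G then (anorm F H : ℂ) else 0 := by
  haveI hfin : Finite {A : Polynomial F // A.degree < H.degree} :=
    finite_deg_lt F _ H.natDegree (fun A hA => by rwa [← degree_eq_natDegree hH0])
  haveI := Fintype.ofFinite {A : Polynomial F // A.degree < H.degree}
  rw [tsum_fintype]
  by_cases hdvd : H ∣ G
  · rw [if_pos hdvd]
    have h1 : ∀ A : {A : Polynomial F // A.degree < H.degree}, echar p F G H A.1 = 1 :=
      fun A => echar_one_of_dvd p F G H A.1 hH (hdvd.mul_right _)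
    rw [Finset.sum_congr rfl (fun A _ => h1 A), Finset.sum_const, nsmul_eq_mul, mul_one]
    have e : {A : Polynomial F // A.degree < H.degree} ≃ (Fin H.natDegree → F) :=
      (Equiv.subtypeEquivRight (fun A => by rw [← degree_eq_natDegree hH0])).trans
        (degLTEquiv F H.natDegree)
    have hc : Fintype.card {A : Polynomial F // A.degree < H.degree}
        = Fintype.card F ^ H.natDegree := by
      rw [Fintype.card_congr e, Fintype.card_fun, Fintype.card_fin]
    rw [Finset.card_univ, hc, anorm]
  · rw [if_neg hdvd]
    obtain ⟨A₀, hA₀d, hA₀⟩ := exists_nontrivial p F G H hH hdvd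
    have hchi : echar p F G H A₀ ≠ 1 := by
      rw [echar_eq]; exact psi_ne_one p hA₀
    set e : {A : Polynomial F // A.degree < H.degree} ≃
        {A : Polynomial F // A.degree < H.degree} :=
      { toFun := fun A => ⟨A.1 + A₀, lt_of_le_of_lt (degree_add_le _ _) (max_lt A.2 hA₀d)⟩
        invFun := fun A => ⟨A.1 - A₀, lt_of_le_of_lt (degree_sub_le _ _) (max_lt A.2 hA₀d)⟩
        left_inv := fun A => Subtype.ext (by simp)
        right_inv := fun A => Subtype.ext (by simp) } with he
    have h2 : ∑ A : {A : Polynomial F // A.degree < H.degree}, echar p F G H A.1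
        = ∑ A : {A : Polynomial F // A.degree < H.degree}, echar p F G H (e A).1 :=
      (Equiv.sum_comp e (fun A => echar p F G H A.1)).symm
    have h3 : ∀ A : {A : Polynomial F // A.degree < H.degree},
        echar p F G H (e A).1 = echar p F G H A₀ * echar p F G H A.1 := fun A => by
      show echar p F G H (A.1 + A₀) = _
      rw [echar_add _ _ _ _ _ _ hH, mul_comm]
    simp_rw [h3] at h2
    rw [← Finset.mul_sum] at h2
    have h4 : (echar p F G H A₀ - 1) *
        (∑ A : {A : Polynomial F // A.degree < H.degree}, echar p F G H A.1) = 0 := by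
      rw [sub_mul, one_mul, ← h2, sub_self]
    exact (mul_eq_zero.1 h4).resolve_left (sub_ne_zero.2 hchi)


lemma nf_prime {X P : Polynomial F} (h : P ∈ (normalizedFactors X).toFinset) : Prime P :=
  prime_of_normalized_factor P (Multiset.mem_toFinset.1 h)

lemma nf_monic {X P : Polynomial F} (h : P ∈ (normalizedFactors X).toFinset) : P.Monic := by
  have h' := Multiset.mem_toFinset.1 h
  have h0 : P ≠ 0 := (prime_of_normalized_factor P h').ne_zero
  have hn := normalize_normalized_factor P h'
  rw [← hn]
  exact monic_normalize h0

lemma mem_nf_iff {X P : Polynomial F} (hX : X ≠ 0) (hP : Prime P) (hPm : P.Monic) :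
    P ∈ normalizedFactors X ↔ P ∣ X := by
  constructor
  · exact dvd_of_mem_normalizedFactors
  · intro h
    obtain ⟨q, hq, hassoc⟩ := exists_mem_normalizedFactors_of_dvd hX hP.irreducible h
    rwa [eq_of_monic_of_associated hPm (nf_monic F (Multiset.mem_toFinset.2 hq)) hassoc]

lemma pow_dvd_iff_le_count {X P : Polynomial F} (hX : X ≠ 0) (hP : Prime P) (hPm : P.Monic)
    (k : ℕ) : P ^ k ∣ X ↔ k ≤ (normalizedFactors X).count P := by
  rw [pow_dvd_iff_le_emultiplicity,
    emultiplicity_eq_count_normalizedFactors hP.irreducible hX, hPm.normalize_eq_self]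
  exact_mod_cast Nat.cast_le

lemma prod_nf_eq {X : Polynomial F} (hX : X.Monic) : (normalizedFactors X).prod = X := by
  refine eq_of_monic_of_associated ?_ hX (prod_normalizedFactors hX.ne_zero)
  have h := monic_multiset_prod_of_monic (normalizedFactors X) id
    (fun P hP => nf_monic F (Multiset.mem_toFinset.2 hP))
  simpa using h

lemma eq_of_prime_dvd_prime {P Q : Polynomial F} (hP : Prime P) (hQ : Prime Q)
    (hPm : P.Monic) (hQm : Q.Monic) (h : P ∣ Q) : P = Q :=
  eq_of_monic_of_associated hPm hQm (hP.associated_of_dvd hQ h)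

lemma coprime_of_distinct {P Q : Polynomial F} (hP : Prime P) (hQ : Prime Q)
    (hPm : P.Monic) (hQm : Q.Monic) (hne : P ≠ Q) : IsCoprime P Q := by
  rcases EuclideanDomain.dvd_or_coprime P Q hP.irreducible with h | h
  · exact absurd (eq_of_prime_dvd_prime F hP hQ hPm hQm h) hne
  · exact h

lemma ugcd_eq_one_iff (B D : Polynomial F) :
    ugcd F B D = 1 ↔
      ∀ P ∈ (normalizedFactors D).toFinset, ¬ P ^ (normalizedFactors D).count P ∣ B := by
  classical
  rw [ugcd]
  constructor
  · intro h P hP hdvd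
    have hd : (if P ^ (normalizedFactors D).count P ∣ B
        then P ^ (normalizedFactors D).count P else 1) ∣
        ∏ P ∈ (normalizedFactors D).toFinset,
          (if P ^ (normalizedFactors D).count P ∣ B
            then P ^ (normalizedFactors D).count P else 1) :=
      Finset.dvd_prod_of_mem _ hP
    rw [if_pos hdvd, h] at hd
    have hc : (normalizedFactors D).count P ≠ 0 :=
      (Multiset.count_pos.2 (Multiset.mem_toFinset.1 hP)).ne'
    exact (nf_prime F hP).not_unit ((isUnit_pow_iff hc).1 (isUnit_of_dvd_one hd))
  · intro h
    exact Finset.prod_eq_one (fun P hP => if_neg (h P hP))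

lemma ugcd_mul_unitary {D C B : Polynomial F} (hD : D.Monic) (hC : C.Monic)
    (hDC : IsCoprime D C) (hB : ugcd F B D = 1) : ugcd F (B * C) (D * C) = C := by
  classical
  have hD0 := hD.ne_zero; have hC0 := hC.ne_zero
  have hnf : normalizedFactors (D * C) = normalizedFactors D + normalizedFactors C :=
    normalizedFactors_mul hD0 hC0
  have hdisj : Disjoint (normalizedFactors D).toFinset (normalizedFactors C).toFinset := by
    rw [Finset.disjoint_left]
    intro P hPD hPC
    exact (nf_prime F hPD).not_unit
      (hDC.isUnit_of_dvd' (dvd_of_mem_normalizedFactors (Multiset.mem_toFinset.1 hPD))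
        (dvd_of_mem_normalizedFactors (Multiset.mem_toFinset.1 hPC)))
  rw [ugcd, hnf, Multiset.toFinset_add, Finset.prod_union hdisj]
  have h1 : ∀ P ∈ (normalizedFactors D).toFinset,
      (if P ^ ((normalizedFactors D + normalizedFactors C).count P) ∣ B * C
        then P ^ ((normalizedFactors D + normalizedFactors C).count P) else 1) = 1 := by
    intro P hPD
    have hPC : P ∉ normalizedFactors C := fun hc =>
      (Finset.disjoint_left.1 hdisj hPD) (Multiset.mem_toFinset.2 hc)
    have hcount : (normalizedFactors D + normalizedFactors C).count P
        = (normalizedFactors D).count P := by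
      rw [Multiset.count_add, Multiset.count_eq_zero.2 hPC, add_zero]
    rw [hcount]
    refine if_neg (fun hdvd => ?_)
    have hPnC : ¬ P ∣ C := fun h =>
      hPC ((mem_nf_iff F hC0 (nf_prime F hPD) (nf_monic F hPD)).2 h)
    have hPB : P ^ (normalizedFactors D).count P ∣ B :=
      (nf_prime F hPD).pow_dvd_of_dvd_mul_right _ hPnC hdvd
    exact (ugcd_eq_one_iff F B D).1 hB P hPD hPB
  rw [Finset.prod_eq_one h1, one_mul]
  have h2 : ∀ P ∈ (normalizedFactors C).toFinset,
      (if P ^ ((normalizedFactors D + normalizedFactors C).count P) ∣ B * C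
        then P ^ ((normalizedFactors D + normalizedFactors C).count P) else 1)
        = P ^ (normalizedFactors C).count P := by
    intro P hPC
    have hPD : P ∉ normalizedFactors D := fun hc =>
      (Finset.disjoint_right.1 hdisj hPC) (Multiset.mem_toFinset.2 hc)
    have hcount : (normalizedFactors D + normalizedFactors C).count P
        = (normalizedFactors C).count P := by
      rw [Multiset.count_add, Multiset.count_eq_zero.2 hPD, zero_add]
    rw [hcount]
    refine if_pos ?_
    have hPc : P ^ (normalizedFactors C).count P ∣ C :=
      (pow_dvd_iff_le_count F hC0 (nf_prime F hPC) (nf_monic F hPC) _).2 le_rfl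
    exact hPc.trans (dvd_mul_left C B)
  rw [Finset.prod_congr rfl h2, ← Finset.prod_multiset_count, prod_nf_eq F hC]

lemma coeff_mul_monic (r C : Polynomial F) (hC : C.Monic) {i : ℕ}
    (hi : r.degree ≤ (i : WithBot ℕ)) : (r * C).coeff (i + C.natDegree) = r.coeff i := by
  rw [coeff_mul]
  rw [Finset.sum_eq_single_of_mem (i, C.natDegree) (Finset.HasAntidiagonal.mem_antidiagonal.2 rfl)]
  · rw [hC.coeff_natDegree, mul_one]
  · rintro ⟨a, b⟩ hab hne
    have hab' : a + b = i + C.natDegree := Finset.HasAntidiagonal.mem_antidiagonal.1 hab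
    rcases lt_trichotomy a i with h | h | h
    · have hb : C.natDegree < b := by omega
      rw [coeff_eq_zero_of_natDegree_lt hb, mul_zero]
    · exact absurd (by simp only [Prod.mk.injEq]; omega : (a,b) = (i, C.natDegree)) hne
    · have : r.degree < (a : WithBot ℕ) := lt_of_le_of_lt hi (by exact_mod_cast h)
      rw [coeff_eq_zero_of_degree_lt this, zero_mul]

lemma tmap_mul_right (D C X : Polynomial F) (hD : D.Monic) (hC : C.Monic) :
    tmap F (D * C) (X * C) = tmap F D X := by
  have hH : (D * C).Monic := hD.mul hC
  have hD0 := hD.ne_zero; have hC0 := hC.ne_zero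
  set r := X %ₘ D with hr
  have hXr : X * C = r * C + (D * C) * (X /ₘ D) := by
    conv_lhs => rw [← modByMonic_add_div X D]
    ring
  have h1 : tmap F (D * C) (X * C) = tmap F (D * C) (r * C) := by
    rw [hXr, tmap_add _ _ _ _ hH, tmap_zero_of_dvd _ _ _ hH (dvd_mul_right _ _), add_zero]
  by_cases hr0 : r = 0
  · rw [h1, hr0, zero_mul, tmap_eq _ _ _ hH, zero_modByMonic, coeff_zero,
      tmap_eq _ _ _ hD, ← hr, hr0, coeff_zero]
  · have hdr : r.degree < D.degree := degree_modByMonic_lt X hD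
    have hd1 : 1 ≤ D.natDegree := by
      by_contra hc
      push_neg at hc
      have : D.natDegree = 0 := by omega
      rw [degree_eq_natDegree hr0, degree_eq_natDegree hD0, this] at hdr
      exact absurd hdr (by exact_mod_cast Nat.not_lt_zero _)
    have hmod : (r * C) %ₘ (D * C) = r * C := by
      rw [modByMonic_eq_self_iff hH, degree_mul, degree_mul]
      exact WithBot.add_lt_add_right (degree_ne_bot.2 hC0) hdr
    have hnd : (D * C).natDegree = D.natDegree + C.natDegree := hD.natDegree_mul hC
    have hndr : r.natDegree < D.natDegree := natDegree_lt_natDegree hr0 hdr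
    rw [h1, tmap_eq _ _ _ hH, hmod, hnd, tmap_eq _ _ _ hD, ← hr]
    have he : D.natDegree + C.natDegree - 1 = (D.natDegree - 1) + C.natDegree := by omega
    rw [he, coeff_mul_monic F r C hC]
    rw [degree_eq_natDegree hr0]
    exact_mod_cast (by omega : r.natDegree ≤ D.natDegree - 1)

lemma ugcd_monic (A H : Polynomial F) : (ugcd F A H).Monic := by
  classical
  rw [ugcd]
  apply monic_prod_of_monic
  intro P hP
  split_ifs
  · exact (nf_monic F hP).pow _
  · exact monic_one

lemma ugcd_dvd_right (A : Polynomial F) {H : Polynomial F} (hH : H.Monic) :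
    ugcd F A H ∣ H := by
  classical
  rw [ugcd]
  conv_rhs => rw [← prod_nf_eq F hH, Finset.prod_multiset_count]
  exact Finset.prod_dvd_prod_of_dvd _ _ (fun P hP => by split_ifs; exacts [dvd_rfl, one_dvd _])

lemma ugcd_dvd_left (A H : Polynomial F) : ugcd F A H ∣ A := by
  classical
  rw [ugcd, ← Finset.prod_filter]
  refine Finset.prod_dvd_of_coprime ?_ (fun P hP => (Finset.mem_filter.1 hP).2)
  intro P hP Q hQ hne
  have hP' := (Finset.mem_filter.1 (Finset.mem_coe.1 hP)).1
  have hQ' := (Finset.mem_filter.1 (Finset.mem_coe.1 hQ)).1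
  exact (coprime_of_distinct F (nf_prime F hP') (nf_prime F hQ') (nf_monic F hP')
    (nf_monic F hQ') hne).pow

lemma pow_count_dvd_ugcd {A H P : Polynomial F} (hP : P ∈ (normalizedFactors H).toFinset)
    (hdvd : P ^ (normalizedFactors H).count P ∣ A) :
    P ^ (normalizedFactors H).count P ∣ ugcd F A H := by
  classical
  rw [ugcd]
  have h := Finset.dvd_prod_of_mem (fun Q =>
    if Q ^ (normalizedFactors H).count Q ∣ A then Q ^ (normalizedFactors H).count Q else 1) hP
  rwa [if_pos hdvd] at h

lemma mem_of_dvd_ugcd {A H P : Polynomial F} (hP : Prime P) (hPm : P.Monic)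
    (h : P ∣ ugcd F A H) :
    P ∈ (normalizedFactors H).toFinset ∧ P ^ (normalizedFactors H).count P ∣ A := by
  classical
  rw [ugcd] at h
  obtain ⟨Q, hQ, hPQ⟩ := hP.exists_mem_finset_dvd h
  by_cases hc : Q ^ (normalizedFactors H).count Q ∣ A
  · rw [if_pos hc] at hPQ
    have hPQ' : P ∣ Q := hP.dvd_of_dvd_pow hPQ
    have hPQeq : P = Q :=
      eq_of_prime_dvd_prime F hP (nf_prime F hQ) hPm (nf_monic F hQ) hPQ'
    subst hPQeq
    exact ⟨hQ, hc⟩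
  · rw [if_neg hc] at hPQ
    exact absurd (isUnit_of_dvd_one hPQ) hP.not_unit

lemma H_eq_ugcd_mul {H : Polynomial F} (hH : H.Monic) (A : Polynomial F) :
    H = ugcd F A H * (H /ₘ ugcd F A H) := by
  conv_lhs => rw [← modByMonic_add_div H (ugcd F A H)]
  rw [(modByMonic_eq_zero_iff_dvd (ugcd_monic F A H)).2 (ugcd_dvd_right F A hH), zero_add]

lemma compl_monic {H : Polynomial F} (hH : H.Monic) (A : Polynomial F) :
    (H /ₘ ugcd F A H).Monic :=
  (ugcd_monic F A H).of_mul_monic_left (by rw [← H_eq_ugcd_mul F hH A]; exact hH)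

lemma isCoprime_compl_ugcd {H : Polynomial F} (hH : H.Monic) (hH0 : H ≠ 0) (A : Polynomial F) :
    IsCoprime (H /ₘ ugcd F A H) (ugcd F A H) := by
  classical
  set U := ugcd F A H with hU
  have hUm : U.Monic := ugcd_monic F A H
  set D' := H /ₘ U with hD'
  by_contra hcop
  have hg0 : EuclideanDomain.gcd D' U ≠ 0 := fun h0 =>
    hUm.ne_zero (EuclideanDomain.gcd_eq_zero_iff.1 h0).2
  have hgu : ¬ IsUnit (EuclideanDomain.gcd D' U) := fun hu =>
    hcop (EuclideanDomain.gcd_isUnit_iff.1 hu)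
  obtain ⟨P0, hP0irr, hP0dvd⟩ := WfDvdMonoid.exists_irreducible_factor hgu hg0
  have hP0p : Prime P0 := UniqueFactorizationMonoid.irreducible_iff_prime.1 hP0irr
  set P := normalize P0 with hP
  have hPp : Prime P := (associated_normalize P0).prime hP0p
  have hPm : P.Monic := monic_normalize hP0p.ne_zero
  have hPD' : P ∣ D' := (normalize_dvd_iff.2 (hP0dvd.trans (EuclideanDomain.gcd_dvd_left _ _)))
  have hPU : P ∣ U := (normalize_dvd_iff.2 (hP0dvd.trans (EuclideanDomain.gcd_dvd_right _ _)))
  obtain ⟨hPmem, hPA⟩ := mem_of_dvd_ugcd F hPp hPm hPU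
  set c := (normalizedFactors H).count P with hc
  have hPcU : P ^ c ∣ U := pow_count_dvd_ugcd F hPmem hPA
  have hPc1 : P ^ (c + 1) ∣ H := by
    rw [H_eq_ugcd_mul F hH A, pow_succ]
    exact mul_dvd_mul hPcU hPD'
  have := (pow_dvd_iff_le_count F hH0 hPp hPm (c + 1)).1 hPc1
  omega

lemma ugcd_quot_eq_one {H : Polynomial F} (hH : H.Monic) (hH0 : H ≠ 0) (A : Polynomial F) :
    ugcd F (A /ₘ ugcd F A H) (H /ₘ ugcd F A H) = 1 := by
  classical
  set U := ugcd F A H with hU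
  have hUm : U.Monic := ugcd_monic F A H
  set D' := H /ₘ U with hD'
  have hD'm : D'.Monic := compl_monic F hH A
  have hAeq : A = U * (A /ₘ U) := by
    conv_lhs => rw [← modByMonic_add_div A U]
    rw [(modByMonic_eq_zero_iff_dvd hUm).2 (ugcd_dvd_left F A H), zero_add]
  rw [ugcd_eq_one_iff]
  intro P hPmem hPdvd
  have hPp : Prime P := nf_prime F hPmem
  have hPm : P.Monic := nf_monic F hPmem
  set c' := (normalizedFactors D').count P with hc'
  have hc'1 : 1 ≤ c' := Multiset.count_pos.2 (Multiset.mem_toFinset.1 hPmem)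
  have hnf : normalizedFactors H = normalizedFactors U + normalizedFactors D' := by
    rw [H_eq_ugcd_mul F hH A]
    exact normalizedFactors_mul hUm.ne_zero hD'm.ne_zero
  have hcount : (normalizedFactors H).count P
      = (normalizedFactors U).count P + c' := by rw [hnf, Multiset.count_add]
  by_cases hmem : P ∈ (normalizedFactors H).toFinset ∧ P ^ (normalizedFactors H).count P ∣ A
  · -- P is chosen in U, leading to c' = 0, contradiction
    obtain ⟨hPH, hPA⟩ := hmem
    have hPcU : P ^ (normalizedFactors H).count P ∣ U := pow_count_dvd_ugcd F hPH hPA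
    have hle : (normalizedFactors H).count P ≤ (normalizedFactors U).count P :=
      (pow_dvd_iff_le_count F hUm.ne_zero hPp hPm _).1 hPcU
    omega
  · -- P not chosen: P ^ count_H ∤ A; but P^{count_U} ∣ U and P^{c'} ∣ A/ₘU
    have hPcU : P ^ (normalizedFactors U).count P ∣ U :=
      (pow_dvd_iff_le_count F hUm.ne_zero hPp hPm _).2 le_rfl
    have hPH : P ∈ (normalizedFactors H).toFinset := by
      rw [Multiset.mem_toFinset, hnf, Multiset.mem_add]
      exact Or.inr (Multiset.mem_toFinset.1 hPmem)
    have hPA : P ^ (normalizedFactors H).count P ∣ A := by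
      rw [hcount, pow_add, hAeq]
      exact mul_dvd_mul hPcU hPdvd
    exact hmem ⟨hPH, hPA⟩

lemma tmap_unitary (H D C X : Polynomial F) (hD : D.Monic) (hC : C.Monic)
    (hHeq : H = D * C) : tmap F H (X * C) = tmap F D X := by
  rw [hHeq]; exact tmap_mul_right F D C X hD hC

lemma ugcd_mul_unitary' (H D C B : Polynomial F) (hD : D.Monic) (hC : C.Monic)
    (hHeq : H = D * C) (hDC : IsCoprime D C) (hB : ugcd F B D = 1) :
    ugcd F (B * C) H = C := by
  rw [hHeq]; exact ugcd_mul_unitary F hD hC hDC hB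

open scoped Classical in
/-- The sum of `η*(G,D)` over the monic unitary divisors `D` of a nonzero monic `H`
equals `|H|` if `H ∣ G` and `0` otherwise. -/
theorem sum_etaStar_unitary_divisors (G H : Polynomial F) (hH : H.Monic) (hH0 : H ≠ 0) :
    (∑' D : {D : Polynomial F // D.Monic ∧ D ∣ H ∧ IsCoprime D (H / D)},
        etaStar p F G D.1) =
      if H ∣ G then (anorm F H : ℂ) else 0 := by
  classical
  haveI hT1 : Finite {D : Polynomial F // D.Monic ∧ D ∣ H ∧ IsCoprime D (H / D)} :=
    finite_deg_lt F _ (H.natDegree + 1) (fun D hD =>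
      lt_of_le_of_lt (degree_le_of_dvd hD.2.1 hH0)
        (by rw [degree_eq_natDegree hH0]; exact_mod_cast lt_add_one _))
  haveI : Fintype {D : Polynomial F // D.Monic ∧ D ∣ H ∧ IsCoprime D (H / D)} :=
    Fintype.ofFinite _
  haveI hT2 : ∀ D : {D : Polynomial F // D.Monic ∧ D ∣ H ∧ IsCoprime D (H / D)},
      Fintype {B : Polynomial F // B.degree < D.1.degree ∧ ugcd F B D.1 = 1} := fun D =>
    @Fintype.ofFinite _ (finite_deg_lt F _ D.1.natDegree (fun B hB => by
      rw [← degree_eq_natDegree D.2.1.ne_zero]; exact hB.1))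
  haveI hT0 : Finite {A : Polynomial F // A.degree < H.degree} :=
    finite_deg_lt F _ H.natDegree (fun A hA => by rwa [← degree_eq_natDegree hH0])
  haveI : Fintype {A : Polynomial F // A.degree < H.degree} := Fintype.ofFinite _
  rw [tsum_fintype]
  have hstep : ∀ D : {D : Polynomial F // D.Monic ∧ D ∣ H ∧ IsCoprime D (H / D)},
      etaStar p F G D.1
        = ∑ B : {B : Polynomial F // B.degree < D.1.degree ∧ ugcd F B D.1 = 1},
            echar p F G D.1 B.1 := fun D => by
    rw [etaStar, tsum_fintype]
  have hC : ∀ D : {D : Polynomial F // D.Monic ∧ D ∣ H ∧ IsCoprime D (H / D)},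
      (H /ₘ D.1).Monic ∧ H = D.1 * (H /ₘ D.1) ∧ IsCoprime D.1 (H /ₘ D.1) := fun D => by
    have hDm := D.2.1
    have hHeq : H = D.1 * (H /ₘ D.1) := by
      conv_lhs => rw [← modByMonic_add_div H D.1]
      rw [(modByMonic_eq_zero_iff_dvd hDm).2 D.2.2.1, zero_add]
    have hCm : (H /ₘ D.1).Monic := hDm.of_mul_monic_left (by rw [← hHeq]; exact hH)
    have hcop : IsCoprime D.1 (H /ₘ D.1) := by
      have h := D.2.2.2
      rwa [← divByMonic_eq_div H hDm] at h
    exact ⟨hCm, hHeq, hcop⟩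
  have hdeg : ∀ (D : {D : Polynomial F // D.Monic ∧ D ∣ H ∧ IsCoprime D (H / D)})
      (B : {B : Polynomial F // B.degree < D.1.degree ∧ ugcd F B D.1 = 1}),
      (B.1 * (H /ₘ D.1)).degree < H.degree := fun D B => by
    obtain ⟨hCm, hHeq, hcop⟩ := hC D
    by_cases hB0 : B.1 = 0
    · rw [hB0, zero_mul, degree_zero, degree_eq_natDegree hH0]
      exact WithBot.bot_lt_coe _
    · conv_rhs => rw [hHeq]
      rw [degree_mul, degree_mul]
      exact WithBot.add_lt_add_right (degree_ne_bot.2 hCm.ne_zero) B.2.1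
  set Ψ : (Σ D : {D : Polynomial F // D.Monic ∧ D ∣ H ∧ IsCoprime D (H / D)},
        {B : Polynomial F // B.degree < D.1.degree ∧ ugcd F B D.1 = 1}) →
      {A : Polynomial F // A.degree < H.degree} :=
    fun x => ⟨x.2.1 * (H /ₘ x.1.1), hdeg x.1 x.2⟩ with hΨ
  have hcompat : ∀ x : (Σ D : {D : Polynomial F // D.Monic ∧ D ∣ H ∧ IsCoprime D (H / D)},
        {B : Polynomial F // B.degree < D.1.degree ∧ ugcd F B D.1 = 1}),
      echar p F G x.1.1 x.2.1 = echar p F G H (Ψ x).1 := by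
    rintro ⟨D, B⟩
    obtain ⟨hCm, hHeq, hcop⟩ := hC D
    show echar p F G D.1 B.1 = echar p F G H (B.1 * (H /ₘ D.1))
    rw [echar_eq, echar_eq]
    have h2 : tmap F H (G * (B.1 * (H /ₘ D.1))) = tmap F D.1 (G * B.1) := by
      rw [show G * (B.1 * (H /ₘ D.1)) = (G * B.1) * (H /ₘ D.1) by ring]
      exact tmap_unitary F H D.1 (H /ₘ D.1) (G * B.1) D.2.1 hCm hHeq
    rw [h2]
  have hinj : Function.Injective Ψ := by
    rintro ⟨D₁, B₁⟩ ⟨D₂, B₂⟩ hval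
    obtain ⟨C₁, hC1m, hH1, hcop1, hC1def⟩ :
        ∃ C, C.Monic ∧ H = D₁.1 * C ∧ IsCoprime D₁.1 C ∧ H /ₘ D₁.1 = C :=
      ⟨H /ₘ D₁.1, (hC D₁).1, (hC D₁).2.1, (hC D₁).2.2, rfl⟩
    obtain ⟨C₂, hC2m, hH2, hcop2, hC2def⟩ :
        ∃ C, C.Monic ∧ H = D₂.1 * C ∧ IsCoprime D₂.1 C ∧ H /ₘ D₂.1 = C :=
      ⟨H /ₘ D₂.1, (hC D₂).1, (hC D₂).2.1, (hC D₂).2.2, rfl⟩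
    have h1 : B₁.1 * C₁ = B₂.1 * C₂ := by
      have h := congrArg Subtype.val hval
      simp only [hΨ] at h
      rwa [hC1def, hC2def] at h
    have hu1 : ugcd F (B₁.1 * C₁) H = C₁ :=
      ugcd_mul_unitary' F H D₁.1 C₁ B₁.1 D₁.2.1 hC1m hH1 hcop1 B₁.2.2
    have hu2 : ugcd F (B₂.1 * C₂) H = C₂ :=
      ugcd_mul_unitary' F H D₂.1 C₂ B₂.1 D₂.2.1 hC2m hH2 hcop2 B₂.2.2
    have hCC : C₁ = C₂ := by rw [← hu1, ← hu2, h1]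
    have hD : D₁.1 = D₂.1 := by
      have h4 : D₁.1 * C₁ = D₂.1 * C₂ := hH1.symm.trans hH2
      rw [← hCC] at h4
      exact mul_right_cancel₀ hC1m.ne_zero h4
    have hDsub : D₁ = D₂ := Subtype.ext hD
    subst hDsub
    have hB : B₁.1 = B₂.1 := by
      apply mul_right_cancel₀ hC1m.ne_zero
      rw [h1, hCC]
    have hBsub : B₁ = B₂ := Subtype.ext hB
    subst hBsub
    rfl
  have hsurj : Function.Surjective Ψ := by
    rintro ⟨A, hA⟩
    obtain ⟨U, hUdef⟩ : ∃ U, ugcd F A H = U := ⟨_, rfl⟩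
    have hUm : U.Monic := hUdef ▸ ugcd_monic F A H
    obtain ⟨D', hD'def⟩ : ∃ D', H /ₘ U = D' := ⟨_, rfl⟩
    have hHeq : H = U * D' := by
      rw [← hD'def, ← hUdef]
      exact H_eq_ugcd_mul F hH A
    have hD'm : D'.Monic := by
      rw [← hD'def, ← hUdef]
      exact compl_monic F hH A
    have hD'dvd : D' ∣ H := ⟨U, by rw [hHeq]; ring⟩
    have hcop : IsCoprime D' U := by
      rw [← hD'def, ← hUdef]
      exact isCoprime_compl_ugcd F hH hH0 A
    have hHD' : H /ₘ D' = U := by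
      conv_lhs => rw [hHeq, mul_comm U D']
      exact mul_divByMonic_cancel_left U hD'm
    have hcopdiv : IsCoprime D' (H / D') := by
      rw [← divByMonic_eq_div H hD'm, hHD']
      exact hcop
    obtain ⟨B, hBdef⟩ : ∃ B, A /ₘ U = B := ⟨_, rfl⟩
    have hAeq : A = U * B := by
      rw [← hBdef]
      conv_lhs => rw [← modByMonic_add_div A U]
      rw [(modByMonic_eq_zero_iff_dvd hUm).2 (hUdef ▸ ugcd_dvd_left F A H), zero_add]
    have hu1 : ugcd F B D' = 1 := by
      rw [← hBdef, ← hD'def, ← hUdef]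
      exact ugcd_quot_eq_one F hH hH0 A
    have hdegB : B.degree < D'.degree := by
      by_cases hA0 : A = 0
      · have hBz : B = 0 := by rw [← hBdef, hA0, zero_divByMonic]
        rw [hBz, degree_zero, degree_eq_natDegree hD'm.ne_zero]
        exact WithBot.bot_lt_coe _
      · have hB0 : B ≠ 0 := fun h => hA0 (by rw [hAeq, h, mul_zero])
        have h1 : A.natDegree < H.natDegree := natDegree_lt_natDegree hA0 hA
        have h2 : A.natDegree = U.natDegree + B.natDegree := by
          rw [hAeq]; exact natDegree_mul hUm.ne_zero hB0
        have h3 : H.natDegree = U.natDegree + D'.natDegree := by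
          rw [hHeq]; exact natDegree_mul hUm.ne_zero hD'm.ne_zero
        rw [degree_eq_natDegree hB0, degree_eq_natDegree hD'm.ne_zero]
        exact_mod_cast (by omega : B.natDegree < D'.natDegree)
    refine ⟨⟨⟨D', hD'm, hD'dvd, hcopdiv⟩, ⟨B, hdegB, hu1⟩⟩, ?_⟩
    apply Subtype.ext
    show B * (H /ₘ D') = A
    rw [hHD', hAeq, mul_comm]
  calc (∑ D : {D : Polynomial F // D.Monic ∧ D ∣ H ∧ IsCoprime D (H / D)}, etaStar p F G D.1)
      = ∑ D : {D : Polynomial F // D.Monic ∧ D ∣ H ∧ IsCoprime D (H / D)},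
          ∑ B : {B : Polynomial F // B.degree < D.1.degree ∧ ugcd F B D.1 = 1},
            echar p F G D.1 B.1 := Finset.sum_congr rfl (fun D _ => hstep D)
    _ = ∑ x : (Σ D : {D : Polynomial F // D.Monic ∧ D ∣ H ∧ IsCoprime D (H / D)},
          {B : Polynomial F // B.degree < D.1.degree ∧ ugcd F B D.1 = 1}),
            echar p F G x.1.1 x.2.1 := by
        rw [← Finset.univ_sigma_univ, Finset.sum_sigma]
    _ = ∑ A : {A : Polynomial F // A.degree < H.degree}, echar p F G H A.1 :=
        Fintype.sum_bijective Ψ ⟨hinj, hsurj⟩ _ _ hcompat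
    _ = if H ∣ G then (anorm F H : ℂ) else 0 := by
        rw [← tsum_fintype (L := SummationFilter.unconditional _)]
        exact tsum_echar_full p F G H hH hH0
end

section
/- Let f : (A₊)^k → ℂ be multiplicative (k ≥ 1) with Σ over all tuples (G₁,…,G_k) ∈ (A₊)^k of |(μ_k ∗ f)(G₁,…,G_k)| / (|G₁|⋯|G_k|) finite. Then for every (H₁,…,H_k) ∈ (A₊)^k the Ramanujan coefficient C_{H₁,…,H_k} = Σ_{M₁,…,M_k ∈ A₊} (μ_k ∗ f)(M₁H₁,…,M_kH_k) / (|M₁H₁|⋯|M_kH_k|) equals the product over all monic irreducible P of Σ over integers e₁ ≥ ν_P(H₁), …, e_k ≥ ν_P(H_k) of (μ_k ∗ f)(P^{e₁},…,P^{e_k}) / |P|^{e₁+⋯+e_k}, where ν_P denotes the exact exponent of P. -/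
open Polynomial UniqueFactorizationMonoid

variable (p : ℕ) [Fact p.Prime] (F : Type) [Field F] [Fintype F] [DecidableEq F]
  [Algebra (ZMod p) F]

/-- The Dirichlet convolution of `μ_k` with `f` on `k`-tuples of monic polynomials:
`(μ_k ∗ f)(G₁,…,G_k) = Σ_{D_i E_i = G_i, D_i,E_i monic} μ(D₁)⋯μ(D_k) · f(E₁,…,E_k)`. -/
noncomputable def muConv {k : ℕ} (f : (Fin k → Polynomial F) → ℂ)
    (G : Fin k → Polynomial F) : ℂ :=
  ∑' DE : {DE : (Fin k → Polynomial F) × (Fin k → Polynomial F) //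
      (∀ i, (DE.1 i).Monic) ∧ (∀ i, (DE.2 i).Monic) ∧ ∀ i, DE.1 i * DE.2 i = G i},
    (∏ i, (mu F (DE.1.1 i) : ℂ)) * f DE.1.2

open scoped Classical in
/-- `ν_P(G)`: the exact exponent of `P` in `G`. -/
noncomputable def nuP (P G : Polynomial F) : ℕ := (normalizedFactors G).count P

set_option linter.unusedSectionVars false
set_option maxHeartbeats 1000000

variable {F}

lemma mem_nf_monic {G Q : Polynomial F} (hQ : Q ∈ normalizedFactors G) : Q.Monic := by
  have h1 := normalize_normalized_factor Q hQ
  have h2 : Q ≠ 0 := (irreducible_of_normalized_factor _ hQ).ne_zero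
  rw [← h1]; exact Polynomial.monic_normalize h2

lemma monic_eq_prod_factors {G : Polynomial F} (hG : G.Monic) :
    G = ∏ Q ∈ (normalizedFactors G).toFinset, Q ^ (normalizedFactors G).count Q := by
  have h0 : G ≠ 0 := hG.ne_zero
  have h := UniqueFactorizationMonoid.prod_normalizedFactors h0
  rw [Finset.prod_multiset_count] at h
  exact (Polynomial.eq_of_monic_of_associated
    (Polynomial.monic_prod_of_monic _ _ fun Q hQ =>
      (mem_nf_monic (Multiset.mem_toFinset.1 hQ)).pow _) hG h).symm

lemma finite_monic_dvd (G : Polynomial F) (hG : G ≠ 0) : Finite {D : Polynomial F // D.Monic ∧ D ∣ G} := by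
  refine Finite.of_injective (fun D => (fun j : Fin (G.natDegree + 1) => D.1.coeff j)) ?_
  intro D₁ D₂ h
  have hd : ∀ D : {D : Polynomial F // D.Monic ∧ D ∣ G}, D.1.natDegree ≤ G.natDegree :=
    fun D => Polynomial.natDegree_le_of_dvd D.2.2 hG
  ext n
  rcases le_or_gt n G.natDegree with hn | hn
  · exact congrFun h ⟨n, Nat.lt_succ_of_le hn⟩
  · rw [Polynomial.coeff_eq_zero_of_natDegree_lt (lt_of_le_of_lt (hd D₁) hn),
      Polynomial.coeff_eq_zero_of_natDegree_lt (lt_of_le_of_lt (hd D₂) hn)]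

/-- Shorthand for monic irreducibles. -/
abbrev MIr (F : Type) [Field F] := {P : Polynomial F // P.Monic ∧ Irreducible P}


lemma mi_coprime {P Q : MIr F} (h : P ≠ Q) : IsCoprime P.1 Q.1 :=
  P.2.2.coprime_iff_not_dvd.2 fun hd => h (Subtype.ext
    (Polynomial.eq_of_monic_of_associated P.2.1 Q.2.1 (P.2.2.associated_of_dvd Q.2.2 hd)))

lemma nf_prod_pow (S : Finset (MIr F)) (σ : MIr F → ℕ) :
    normalizedFactors (∏ P ∈ S, P.1 ^ σ P) = ∑ P ∈ S, (σ P) • ({P.1} : Multiset (Polynomial F)) := by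
  classical
  induction S using Finset.cons_induction with
  | empty => simpa using UniqueFactorizationMonoid.normalizedFactors_one
  | cons a s ha ih =>
    rw [Finset.prod_cons, Finset.sum_cons,
      normalizedFactors_mul (pow_ne_zero _ a.2.1.ne_zero)
        (Finset.prod_ne_zero_iff.2 fun Q _ => pow_ne_zero _ Q.2.1.ne_zero), ih,
      normalizedFactors_pow, normalizedFactors_irreducible a.2.2, a.2.1.normalize_eq_self]

lemma nuP_prod_pow (S : Finset (MIr F)) (σ : MIr F → ℕ) (P : MIr F) :
    nuP F P.1 (∏ Q ∈ S, Q.1 ^ σ Q) = if P ∈ S then σ P else 0 := by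
  classical
  rw [nuP, nf_prod_pow, Multiset.count_sum']
  simp only [Multiset.count_nsmul, Multiset.count_singleton]
  have h : ∀ Q ∈ S, σ Q * (if P.1 = Q.1 then 1 else 0) = if Q = P then σ Q else 0 := by
    intro Q _
    by_cases h : Q = P
    · subst h; simp
    · have h2 : ¬ (P.1 = Q.1) := fun hh => h (Subtype.ext hh.symm)
      simp [h2, h]
  rw [Finset.sum_congr rfl h, Finset.sum_ite_eq' S P σ]

lemma eq_prod_pow {G : Polynomial F} (hG : G.Monic) (S : Finset (MIr F))
    (hS : ∀ P : MIr F, nuP F P.1 G ≠ 0 → P ∈ S) :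
    G = ∏ P ∈ S, P.1 ^ nuP F P.1 G := by
  classical
  have h1 := monic_eq_prod_factors hG
  have h2 : ∏ P ∈ (normalizedFactors G).toFinset.subtype (fun q => q.Monic ∧ Irreducible q),
      (P : Polynomial F) ^ nuP F (P : Polynomial F) G
      = ∏ Q ∈ (normalizedFactors G).toFinset, Q ^ nuP F Q G :=
    Finset.prod_subtype_of_mem (fun y => y ^ nuP F y G) fun Q hQ =>
      ⟨mem_nf_monic (Multiset.mem_toFinset.1 hQ),
       irreducible_of_normalized_factor _ (Multiset.mem_toFinset.1 hQ)⟩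
  simp only [nuP] at h2 ⊢
  conv_lhs => rw [h1]
  rw [← h2]
  refine Finset.prod_subset (fun P hP => ?_) (fun P _ hP => ?_)
  · have hm := Finset.mem_subtype.1 hP
    rw [Multiset.mem_toFinset, ← Multiset.count_pos] at hm
    exact hS P (by simpa [nuP] using Nat.pos_iff_ne_zero.1 hm)
  · have hm : P.1 ∉ (normalizedFactors G).toFinset := fun h => hP (Finset.mem_subtype.2 h)
    rw [Multiset.mem_toFinset] at hm
    rw [Multiset.count_eq_zero.2 hm, pow_zero]

lemma anorm_pos (G : Polynomial F) : 0 < anorm F G :=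
  pow_pos Fintype.card_pos _

lemma anorm_mul {G G' : Polynomial F} (hG : G ≠ 0) (hG' : G' ≠ 0) :
    anorm F (G * G') = anorm F G * anorm F G' := by
  rw [anorm, Polynomial.natDegree_mul hG hG', pow_add]; rfl

lemma anorm_pow (P : Polynomial F) (n : ℕ) : anorm F (P ^ n) = anorm F P ^ n := by
  rw [anorm, Polynomial.natDegree_pow, pow_mul']; rfl


lemma mu_one : mu F (1 : Polynomial F) = 1 := by
  classical
  rw [mu, if_pos squarefree_one, omega]
  simp [UniqueFactorizationMonoid.normalizedFactors_one]

lemma mu_mul {A B : Polynomial F} (hA : A ≠ 0) (hB : B ≠ 0) (h : IsCoprime A B) :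
    mu F (A * B) = mu F A * mu F B := by
  classical
  by_cases hsq : Squarefree A ∧ Squarefree B
  · have hs : Squarefree (A * B) := squarefree_mul_iff.2 ⟨h.isRelPrime, hsq.1, hsq.2⟩
    have hdisj : Disjoint (normalizedFactors A).toFinset (normalizedFactors B).toFinset := by
      refine Finset.disjoint_left.2 fun Q hQA hQB => ?_
      exact (irreducible_of_normalized_factor Q (Multiset.mem_toFinset.1 hQA)).not_isUnit
        (h.isUnit_of_dvd' (dvd_of_mem_normalizedFactors (Multiset.mem_toFinset.1 hQA))
          (dvd_of_mem_normalizedFactors (Multiset.mem_toFinset.1 hQB)))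
    rw [mu, mu, mu, if_pos hs, if_pos hsq.1, if_pos hsq.2, ← pow_add]
    congr 1
    rw [omega, omega, omega, normalizedFactors_mul hA hB, Multiset.toFinset_add,
      Finset.card_union_of_disjoint hdisj]
  · have hns : ¬ Squarefree (A * B) := fun hs => hsq ⟨hs.of_mul_left, hs.of_mul_right⟩
    rw [mu, if_neg hns]
    simp only [mu]
    rcases not_and_or.1 hsq with h' | h'
    · rw [if_neg h', zero_mul]
    · rw [if_neg h', mul_zero]

section ConvMul

variable {k : ℕ}

/-- The index type of the sum defining `muConv`. -/
abbrev FPairs (G : Fin k → Polynomial F) :=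
  {DE : (Fin k → Polynomial F) × (Fin k → Polynomial F) //
      (∀ i, (DE.1 i).Monic) ∧ (∀ i, (DE.2 i).Monic) ∧ ∀ i, DE.1 i * DE.2 i = G i}

lemma finite_fpairs {G : Fin k → Polynomial F} (hG : ∀ i, (G i).Monic) : Finite (FPairs (F := F) G) := by
  haveI : ∀ i, Finite {D : Polynomial F // D.Monic ∧ D ∣ G i} :=
    fun i => finite_monic_dvd (G i) (hG i).ne_zero
  refine Finite.of_injective
    (fun DE => (fun i => (⟨DE.1.1 i, DE.2.1 i, ⟨DE.1.2 i, (DE.2.2.2 i).symm⟩⟩ :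
      {D : Polynomial F // D.Monic ∧ D ∣ G i}))) ?_
  intro z₁ z₂ hz
  have hD : ∀ i, z₁.1.1 i = z₂.1.1 i := fun i => congrArg Subtype.val (congrFun hz i)
  have hE : ∀ i, z₁.1.2 i = z₂.1.2 i := by
    intro i
    have := (z₁.2.2.2 i).trans (z₂.2.2.2 i).symm
    rw [hD i] at this
    exact mul_left_cancel₀ (z₂.2.1 i).ne_zero this
  exact Subtype.ext (Prod.ext_iff.mpr ⟨funext hD, funext hE⟩)

lemma muConv_one (f : (Fin k → Polynomial F) → ℂ) :
    muConv F f (fun _ : Fin k => 1) = f (fun _ => 1) := by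
  classical
  rw [muConv, tsum_eq_single (⟨((fun _ => 1), (fun _ => 1)), fun _ => monic_one,
      fun _ => monic_one, fun _ => one_mul 1⟩ :
      FPairs (F := F) (fun _ : Fin k => (1 : Polynomial F))) ?_]
  · simp [mu_one]
  · intro c hc
    exfalso
    apply hc
    have hD : ∀ i, c.1.1 i = 1 := fun i =>
      (c.2.1 i).eq_one_of_isUnit (IsUnit.of_mul_eq_one _ (c.2.2.2 i))
    have hE : ∀ i, c.1.2 i = 1 := by
      intro i
      have h' : c.1.1 i * c.1.2 i = 1 := c.2.2.2 i
      rw [hD i, one_mul] at h'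
      exact h'
    exact Subtype.ext (Prod.ext_iff.mpr ⟨funext hD, funext hE⟩)

lemma muConv_mul (f : (Fin k → Polynomial F) → ℂ)
    (hmul : ∀ G H : Fin k → Polynomial F, (∀ i, (G i).Monic) → (∀ i, (H i).Monic) →
      IsCoprime (∏ i, G i) (∏ i, H i) → f (fun i => G i * H i) = f G * f H)
    {G G' : Fin k → Polynomial F} (hG : ∀ i, (G i).Monic) (hG' : ∀ i, (G' i).Monic)
    (hcop : IsCoprime (∏ i, G i) (∏ i, G' i)) :
    muConv F f (fun i => G i * G' i) = muConv F f G * muConv F f G' := by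
  classical
  haveI h1 : Finite (FPairs (F := F) G) := finite_fpairs hG
  haveI h2 : Finite (FPairs (F := F) G') := finite_fpairs hG'
  have hco : ∀ {x y : Polynomial F} (i j : Fin k), x ∣ G i → y ∣ G' j → IsCoprime x y :=
    fun i j hx hy =>
      (hcop.of_isCoprime_of_dvd_left (hx.trans (Finset.dvd_prod_of_mem _ (Finset.mem_univ i)))).of_isCoprime_of_dvd_right
        (hy.trans (Finset.dvd_prod_of_mem _ (Finset.mem_univ j)))
  set φ : FPairs (F := F) G × FPairs (F := F) G' → FPairs (F := F) (fun i => G i * G' i) :=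
    fun z => ⟨((fun i => z.1.1.1 i * z.2.1.1 i), (fun i => z.1.1.2 i * z.2.1.2 i)),
      fun i => (z.1.2.1 i).mul (z.2.2.1 i), fun i => (z.1.2.2.1 i).mul (z.2.2.2.1 i),
      fun i => by rw [mul_mul_mul_comm, z.1.2.2.2 i, z.2.2.2.2 i]⟩ with hφ
  have hbij : Function.Bijective φ := by
    constructor
    · rintro ⟨⟨⟨D₁, E₁⟩, hD₁m, hE₁m, hDE₁⟩, ⟨⟨D₁', E₁'⟩, hD₁'m, hE₁'m, hDE₁'⟩⟩
        ⟨⟨⟨D₂, E₂⟩, hD₂m, hE₂m, hDE₂⟩, ⟨⟨D₂', E₂'⟩, hD₂'m, hE₂'m, hDE₂'⟩⟩ hz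
      simp only [hφ, Subtype.mk.injEq, Prod.mk.injEq] at hz
      obtain ⟨hD, hE⟩ := hz
      have hDD : ∀ i, D₁ i = D₂ i := by
        intro i
        have hd12 : D₁ i ∣ D₂ i * D₂' i := by
          rw [← congrFun hD i]; exact Dvd.intro _ rfl
        have hd21 : D₂ i ∣ D₁ i * D₁' i := by
          rw [congrFun hD i]; exact Dvd.intro _ rfl
        refine Polynomial.eq_of_monic_of_associated (hD₁m i) (hD₂m i)
          (associated_of_dvd_dvd ?_ ?_)
        · exact (hco i i ⟨E₁ i, (hDE₁ i).symm⟩ ⟨E₂' i, (hDE₂' i).symm⟩).dvd_of_dvd_mul_right hd12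
        · exact (hco i i ⟨E₂ i, (hDE₂ i).symm⟩ ⟨E₁' i, (hDE₁' i).symm⟩).dvd_of_dvd_mul_right hd21
      have hDD' : ∀ i, D₁' i = D₂' i := by
        intro i
        have := congrFun hD i
        rw [hDD i] at this
        exact mul_left_cancel₀ (hD₂m i).ne_zero this
      have hEE : ∀ i, E₁ i = E₂ i := by
        intro i
        have h' : D₁ i * E₁ i = D₂ i * E₂ i := (hDE₁ i).trans (hDE₂ i).symm
        rw [hDD i] at h'
        exact mul_left_cancel₀ (hD₂m i).ne_zero h'
      have hEE' : ∀ i, E₁' i = E₂' i := by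
        intro i
        have h' : D₁' i * E₁' i = D₂' i * E₂' i := (hDE₁' i).trans (hDE₂' i).symm
        rw [hDD' i] at h'
        exact mul_left_cancel₀ (hD₂'m i).ne_zero h'
      exact Prod.ext_iff.mpr ⟨Subtype.ext (Prod.ext_iff.mpr ⟨funext hDD, funext hEE⟩),
        Subtype.ext (Prod.ext_iff.mpr ⟨funext hDD', funext hEE'⟩)⟩
    · rintro ⟨⟨D'', E''⟩, hD''m, hE''m, hDE''⟩
      have hdec : ∀ i, ∃ d d' : Polynomial F, d.Monic ∧ d'.Monic ∧ d ∣ G i ∧ d' ∣ G' i ∧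
          d * d' = D'' i := by
        intro i
        have hdvd : D'' i ∣ G i * G' i := ⟨E'' i, (hDE'' i).symm⟩
        obtain ⟨a, b, ha, hb, hab⟩ := exists_dvd_and_dvd_of_dvd_mul hdvd
        have hab0 : a * b ≠ 0 := hab ▸ (hD''m i).ne_zero
        have ha0 : a ≠ 0 := fun h => hab0 (by rw [h, zero_mul])
        have hb0 : b ≠ 0 := fun h => hab0 (by rw [h, mul_zero])
        refine ⟨normalize a, normalize b, Polynomial.monic_normalize ha0,
          Polynomial.monic_normalize hb0, normalize_dvd_iff.2 ha, normalize_dvd_iff.2 hb, ?_⟩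
        rw [← normalize_mul, ← hab, (hD''m i).normalize_eq_self]
      choose d d' hdm hd'm hdG hd'G hdd' using hdec
      set E : Fin k → Polynomial F := fun i => G i / d i with hEdef
      set E' : Fin k → Polynomial F := fun i => G' i / d' i with hE'def
      have hE : ∀ i, d i * E i = G i :=
        fun i => EuclideanDomain.mul_div_cancel' (hdm i).ne_zero (hdG i)
      have hE' : ∀ i, d' i * E' i = G' i :=
        fun i => EuclideanDomain.mul_div_cancel' (hd'm i).ne_zero (hd'G i)
      have hEm : ∀ i, (E i).Monic := fun i => (hdm i).of_mul_monic_left (by rw [hE i]; exact hG i)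
      have hE'm : ∀ i, (E' i).Monic :=
        fun i => (hd'm i).of_mul_monic_left (by rw [hE' i]; exact hG' i)
      refine ⟨(⟨(d, E), hdm, hEm, hE⟩, ⟨(d', E'), hd'm, hE'm, hE'⟩), ?_⟩
      refine Subtype.ext (Prod.ext_iff.mpr ⟨funext fun i => hdd' i, funext fun i => ?_⟩)
      have h3 : D'' i * E'' i = G i * G' i := hDE'' i
      have hcancel : (d i * d' i) * (E i * E' i) = (d i * d' i) * E'' i :=
        calc (d i * d' i) * (E i * E' i) = (d i * E i) * (d' i * E' i) := mul_mul_mul_comm _ _ _ _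
          _ = G i * G' i := by rw [hE i, hE' i]
          _ = D'' i * E'' i := h3.symm
          _ = (d i * d' i) * E'' i := by rw [hdd' i]
      exact mul_left_cancel₀ (((hdm i).mul (hd'm i)).ne_zero) hcancel
  have hterm : ∀ z : FPairs (F := F) G × FPairs (F := F) G',
      (∏ i, (mu F ((φ z).1.1 i) : ℂ)) * f (φ z).1.2 =
        ((∏ i, (mu F (z.1.1.1 i) : ℂ)) * f z.1.1.2) * ((∏ i, (mu F (z.2.1.1 i) : ℂ)) * f z.2.1.2) := by
    rintro ⟨⟨⟨D, E⟩, hDm, hEm, hDE⟩, ⟨⟨D', E'⟩, hD'm, hE'm, hDE'⟩⟩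
    have hmu : ∀ i, (mu F (D i * D' i) : ℂ) = (mu F (D i) : ℂ) * (mu F (D' i) : ℂ) := by
      intro i
      rw [mu_mul (hDm i).ne_zero (hD'm i).ne_zero
        (hco i i ⟨E i, (hDE i).symm⟩ ⟨E' i, (hDE' i).symm⟩)]
      push_cast; ring
    have hf : f (fun i => E i * E' i) = f E * f E' := by
      refine hmul E E' hEm hE'm ?_
      refine IsCoprime.prod_left fun i _ => IsCoprime.prod_right fun j _ => ?_
      exact hco i j ⟨D i, by rw [mul_comm]; exact (hDE i).symm⟩
        ⟨D' j, by rw [mul_comm]; exact (hDE' j).symm⟩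
    simp only [hφ]
    rw [Finset.prod_congr rfl (fun i _ => hmu i), Finset.prod_mul_distrib, hf]
    ring
  have hs1 : Summable fun x : FPairs (F := F) G => ‖(∏ i, (mu F (x.1.1 i) : ℂ)) * f x.1.2‖ :=
    Summable.of_finite
  have hs2 : Summable fun x : FPairs (F := F) G' => ‖(∏ i, (mu F (x.1.1 i) : ℂ)) * f x.1.2‖ :=
    Summable.of_finite
  rw [muConv, muConv, muConv, tsum_mul_tsum_of_summable_norm hs1 hs2,
    ← (Equiv.ofBijective φ hbij).tsum_eq (fun w => (∏ i, (mu F (w.1.1 i) : ℂ)) * f w.1.2)]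
  exact (tsum_congr fun z => (hterm z).symm).symm

end ConvMul

section EquivChunk

variable {k : ℕ}

open scoped Classical in
noncomputable def expOf (M : Fin k → Polynomial F) : MIr F →₀ (Fin k → ℕ) where
  support := Finset.univ.biUnion fun i =>
    ((normalizedFactors (M i)).toFinset.subtype (fun q => q.Monic ∧ Irreducible q))
  toFun := fun P => fun i => nuP F P.1 (M i)
  mem_support_toFun := by
    intro P
    rw [Finset.mem_biUnion]
    constructor
    · rintro ⟨i, -, hi⟩
      have := Finset.mem_subtype.1 hi
      rw [Multiset.mem_toFinset, ← Multiset.count_pos] at this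
      exact Function.ne_iff.2 ⟨i, by simpa [nuP] using Nat.pos_iff_ne_zero.1 this⟩
    · intro h
      obtain ⟨i, hi⟩ := Function.ne_iff.1 h
      refine ⟨i, Finset.mem_univ i, Finset.mem_subtype.2 ?_⟩
      rw [Multiset.mem_toFinset, ← Multiset.count_pos]
      exact Nat.pos_of_ne_zero (by simpa [nuP] using hi)

lemma expOf_apply (M : Fin k → Polynomial F) (P : MIr F) (i : Fin k) :
    expOf (F := F) M P i = nuP F P.1 (M i) := rfl

noncomputable def polyOf (σ : MIr F →₀ (Fin k → ℕ)) : Fin k → Polynomial F :=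
  fun i => ∏ P ∈ σ.support, P.1 ^ σ P i

lemma polyOf_monic (σ : MIr F →₀ (Fin k → ℕ)) (i : Fin k) : (polyOf (F := F) σ i).Monic :=
  Polynomial.monic_prod_of_monic _ _ fun P _ => P.2.1.pow _

lemma nuP_polyOf (σ : MIr F →₀ (Fin k → ℕ)) (P : MIr F) (i : Fin k) :
    nuP F P.1 (polyOf (F := F) σ i) = σ P i := by
  rw [polyOf, nuP_prod_pow σ.support (fun Q => σ Q i) P]
  by_cases h : P ∈ σ.support
  · simp [h]
  · simp [h, Finsupp.notMem_support_iff.1 h]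

noncomputable def monicEquiv :
    {M : Fin k → Polynomial F // ∀ i, (M i).Monic} ≃ (MIr F →₀ (Fin k → ℕ)) where
  toFun M := expOf (F := F) M.1
  invFun σ := ⟨polyOf (F := F) σ, polyOf_monic σ⟩
  left_inv M := by
    refine Subtype.ext (funext fun i => ?_)
    have h := eq_prod_pow (M.2 i) (expOf (F := F) M.1).support (fun P hP => ?_)
    · exact h.symm
    · rw [Finsupp.mem_support_iff]
      exact Function.ne_iff.2 ⟨i, hP⟩
  right_inv σ := by
    refine Finsupp.ext fun P => funext fun i => ?_
    exact nuP_polyOf σ P i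

lemma nuP_mul {A B : Polynomial F} (P : Polynomial F) (hA : A ≠ 0) (hB : B ≠ 0) :
    nuP F P (A * B) = nuP F P A + nuP F P B := by
  rw [nuP, nuP, nuP, normalizedFactors_mul hA hB, Multiset.count_add]

lemma anorm_prod_monic {ι : Type*} (S : Finset ι) (g : ι → Polynomial F)
    (hg : ∀ s ∈ S, (g s).Monic) :
    anorm F (∏ s ∈ S, g s) = ∏ s ∈ S, anorm F (g s) := by
  classical
  induction S using Finset.cons_induction with
  | empty => simp [anorm]
  | cons a s ha ih =>
    rw [Finset.prod_cons, Finset.prod_cons,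
      anorm_mul (hg a (Finset.mem_cons_self a s)).ne_zero
        (Polynomial.monic_prod_of_monic _ _ fun b hb => hg b (Finset.mem_cons_of_mem hb)).ne_zero,
      ih fun b hb => hg b (Finset.mem_cons_of_mem hb)]

lemma muConv_prod_pow (f : (Fin k → Polynomial F) → ℂ)
    (hmul : ∀ G H : Fin k → Polynomial F, (∀ i, (G i).Monic) → (∀ i, (H i).Monic) →
      IsCoprime (∏ i, G i) (∏ i, H i) → f (fun i => G i * H i) = f G * f H)
    (h1 : f (fun _ => 1) = 1)
    (S : Finset (MIr F)) (σ : MIr F → Fin k → ℕ) :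
    muConv F f (fun i => ∏ P ∈ S, P.1 ^ σ P i) = ∏ P ∈ S, muConv F f (fun i => P.1 ^ σ P i) := by
  classical
  induction S using Finset.cons_induction with
  | empty => simpa using (muConv_one f).trans h1
  | cons a s ha ih =>
    have hstep : muConv F f (fun i => ∏ P ∈ Finset.cons a s ha, P.1 ^ σ P i) =
        muConv F f (fun i => a.1 ^ σ a i * ∏ P ∈ s, P.1 ^ σ P i) := by
      congr 1
      funext i
      rw [Finset.prod_cons]
    rw [hstep, Finset.prod_cons,
      muConv_mul f hmul (fun i => a.2.1.pow _)
        (fun i => Polynomial.monic_prod_of_monic _ _ fun Q _ => Q.2.1.pow _) ?_, ih]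
    refine IsCoprime.prod_left fun i _ => IsCoprime.prod_right fun j _ => ?_
    refine IsCoprime.prod_right fun Q hQ => ?_
    exact (mi_coprime (fun (h : a = Q) => ha (by rw [h]; exact hQ))).pow

lemma term_euler (f : (Fin k → Polynomial F) → ℂ)
    (hmul : ∀ G H : Fin k → Polynomial F, (∀ i, (G i).Monic) → (∀ i, (H i).Monic) →
      IsCoprime (∏ i, G i) (∏ i, H i) → f (fun i => G i * H i) = f G * f H)
    (h1 : f (fun _ => 1) = 1)
    {G : Fin k → Polynomial F} (hG : ∀ i, (G i).Monic) (S : Finset (MIr F))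
    (hS : ∀ (P : MIr F) (i : Fin k), nuP F P.1 (G i) ≠ 0 → P ∈ S) :
    muConv F f G / ∏ i, (anorm F (G i) : ℂ) =
      ∏ P ∈ S, (muConv F f (fun i => P.1 ^ nuP F P.1 (G i)) /
        (anorm F P.1 : ℂ) ^ (∑ i, nuP F P.1 (G i))) := by
  classical
  have hGi : ∀ i, G i = ∏ P ∈ S, P.1 ^ nuP F P.1 (G i) :=
    fun i => eq_prod_pow (hG i) S (fun P hP => hS P i hP)
  have hb : muConv F f G = ∏ P ∈ S, muConv F f (fun i => P.1 ^ nuP F P.1 (G i)) := by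
    have := muConv_prod_pow f hmul h1 S (fun P i => nuP F P.1 (G i))
    rw [← this]
    congr 1
    funext i
    exact hGi i
  have hc : (∏ i, (anorm F (G i) : ℂ)) =
      ∏ P ∈ S, (anorm F P.1 : ℂ) ^ (∑ i, nuP F P.1 (G i)) := by
    have hrow : ∀ i, (anorm F (G i) : ℂ) = ∏ P ∈ S, (anorm F P.1 : ℂ) ^ nuP F P.1 (G i) := by
      intro i
      conv_lhs => rw [hGi i]
      rw [anorm_prod_monic S _ (fun P _ => P.2.1.pow _)]
      push_cast
      refine Finset.prod_congr rfl fun P _ => ?_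
      rw [anorm_pow]
      push_cast
      ring
    rw [Finset.prod_congr rfl fun i (_ : i ∈ Finset.univ) => hrow i, Finset.prod_comm]
    exact Finset.prod_congr rfl fun P _ => Finset.prod_pow_eq_pow_sum _ _ _
  rw [hb, hc, Finset.prod_div_distrib]

end EquivChunk

section Analytic

open Filter Topology

variable {ι : Type*} {k : ℕ}

open Finset in
/-- Splitting equivalence for finsupps supported in `insert a T`. -/
noncomputable def finsuppSplit [DecidableEq ι] (a : ι) (T : Finset ι) (ha : a ∉ T) :
    ((Fin k → ℕ) × {σ : ι →₀ (Fin k → ℕ) // σ.support ⊆ T}) ≃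
      {σ : ι →₀ (Fin k → ℕ) // σ.support ⊆ Finset.cons a T ha} where
  toFun z := ⟨Finsupp.single a z.1 + z.2.1, by
    refine (Finsupp.support_add).trans ?_
    intro x hx
    rcases Finset.mem_union.1 hx with hx | hx
    · exact Finset.mem_cons.2 (Or.inl (Finset.mem_singleton.1 (Finsupp.support_single_subset hx)))
    · exact Finset.mem_cons.2 (Or.inr (z.2.2 hx))⟩
  invFun σ := (σ.1 a, ⟨σ.1.erase a, by
    rw [Finsupp.support_erase]
    intro x hx
    have hx1 := Finset.mem_erase.1 hx
    rcases Finset.mem_cons.1 (σ.2 hx1.2) with h | h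
    · exact absurd h hx1.1
    · exact h⟩)
  left_inv z := by
    have hz0 : z.2.1 a = 0 := Finsupp.notMem_support_iff.1 (fun h => ha (z.2.2 h))
    dsimp only
    refine Prod.ext_iff.mpr ⟨?_, Subtype.ext ?_⟩
    · simp [hz0]
    · ext b x
      by_cases hb : b = a
      · subst hb
        rw [Finsupp.erase_same]
        exact congrFun hz0.symm x
      · simp [Finsupp.erase_ne hb, Finsupp.single_eq_of_ne' (Ne.symm hb)]
  right_inv σ := Subtype.ext (Finsupp.single_add_erase a σ.1)

lemma finsuppSplit_apply_self [DecidableEq ι] (a : ι) (T : Finset ι) (ha : a ∉ T)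
    (z : (Fin k → ℕ) × {σ : ι →₀ (Fin k → ℕ) // σ.support ⊆ T}) :
    ((finsuppSplit a T ha z) : {σ : ι →₀ (Fin k → ℕ) // σ.support ⊆ Finset.cons a T ha}).1 a = z.1 := by
  have hz0 : z.2.1 a = 0 := Finsupp.notMem_support_iff.1 (fun h => ha (z.2.2 h))
  simp [finsuppSplit, hz0]

lemma finsuppSplit_apply_ne [DecidableEq ι] (a : ι) (T : Finset ι) (ha : a ∉ T)
    (z : (Fin k → ℕ) × {σ : ι →₀ (Fin k → ℕ) // σ.support ⊆ T}) {b : ι} (hb : b ≠ a) :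
    ((finsuppSplit a T ha z) : {σ : ι →₀ (Fin k → ℕ) // σ.support ⊆ Finset.cons a T ha}).1 b = z.2.1 b := by
  simp [finsuppSplit, Finsupp.single_eq_of_ne' (Ne.symm hb)]

lemma prod_tsum_eq_tsum_finsupp (c : ι → (Fin k → ℕ) → ℂ)
    (hc : ∀ a : ι, Summable fun e => ‖c a e‖) (T : Finset ι) :
    Summable (fun σ : {σ : ι →₀ (Fin k → ℕ) // σ.support ⊆ T} => ∏ P ∈ T, ‖c P (σ.1 P)‖) ∧
    (∏ P ∈ T, ∑' e, c P e) =
      ∑' σ : {σ : ι →₀ (Fin k → ℕ) // σ.support ⊆ T}, ∏ P ∈ T, c P (σ.1 P) := by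
  classical
  induction T using Finset.cons_induction with
  | empty =>
    haveI : Subsingleton {σ : ι →₀ (Fin k → ℕ) // σ.support ⊆ (∅ : Finset ι)} := by
      constructor
      rintro ⟨x, hx⟩ ⟨y, hy⟩
      have hx0 : x = 0 := Finsupp.support_eq_empty.1 (Finset.subset_empty.1 hx)
      have hy0 : y = 0 := Finsupp.support_eq_empty.1 (Finset.subset_empty.1 hy)
      exact Subtype.ext (hx0.trans hy0.symm)
    constructor
    · exact Summable.of_finite
    · rw [Finset.prod_empty,
        tsum_eq_single (⟨0, by simp⟩ : {σ : ι →₀ (Fin k → ℕ) // σ.support ⊆ (∅ : Finset ι)})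
          (fun c' hc' => absurd (Subsingleton.elim c' _) hc')]
      rw [Finset.prod_empty]
  | cons a T ha ih =>
    have hterm : ∀ z : (Fin k → ℕ) × {σ : ι →₀ (Fin k → ℕ) // σ.support ⊆ T},
        ∀ {β : Type} [CommMonoid β] (g : ι → (Fin k → ℕ) → β),
        (∏ P ∈ Finset.cons a T ha, g P (((finsuppSplit a T ha) z).1 P)) =
          g a z.1 * ∏ P ∈ T, g P (z.2.1 P) := by
      intro z β _ g
      rw [Finset.prod_cons, finsuppSplit_apply_self a T ha z]
      congr 1
      refine Finset.prod_congr rfl fun P hP => ?_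
      rw [finsuppSplit_apply_ne a T ha z (fun h => ha (h ▸ hP))]
    constructor
    · have hs : Summable (fun z : (Fin k → ℕ) × {σ : ι →₀ (Fin k → ℕ) // σ.support ⊆ T} =>
          ‖c a z.1‖ * ∏ P ∈ T, ‖c P (z.2.1 P)‖) :=
        (hc a).mul_of_nonneg ih.1 (fun e => norm_nonneg _)
          (fun σ => Finset.prod_nonneg fun P _ => norm_nonneg _)
      have := ((finsuppSplit (k := k) a T ha).summable_iff
        (f := fun σ : {σ : ι →₀ (Fin k → ℕ) // σ.support ⊆ Finset.cons a T ha} =>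
          ∏ P ∈ Finset.cons a T ha, ‖c P (σ.1 P)‖)).1 ?_
      · exact this
      · refine (summable_congr ?_).2 hs
        intro z
        simp only [Function.comp]
        rw [← hterm z (fun P e => ‖c P e‖)]
    · have hsc : Summable (fun e : Fin k → ℕ => c a e) := (hc a).of_norm
      have hnorm2 : Summable (fun σ : {σ : ι →₀ (Fin k → ℕ) // σ.support ⊆ T} =>
          ‖∏ P ∈ T, c P (σ.1 P)‖) := by
        refine (summable_congr ?_).2 ih.1
        intro σ
        rw [norm_prod]
      rw [Finset.prod_cons, ih.2, tsum_mul_tsum_of_summable_norm (hc a) hnorm2,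
        ← ((finsuppSplit (k := k) a T ha)).tsum_eq
          (f := fun σ : {σ : ι →₀ (Fin k → ℕ) // σ.support ⊆ Finset.cons a T ha} =>
            ∏ P ∈ Finset.cons a T ha, c P (σ.1 P))]
      refine tsum_congr fun z => ?_
      rw [hterm z c]

lemma tendsto_tsum_finsupp_subsets {M : Type*} [AddCommMonoid M] (g : (ι →₀ M) → ℂ)
    (hg : Summable fun σ => ‖g σ‖) :
    Filter.Tendsto (fun T : Finset ι => ∑' σ : {σ : ι →₀ M // σ.support ⊆ T}, g σ.1)
      Filter.atTop (𝓝 (∑' σ, g σ)) := by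
  classical
  have hgs : Summable g := hg.of_norm
  rw [Metric.tendsto_nhds]
  intro ε hε
  have htail := tendsto_tsum_compl_atTop_zero (fun σ : ι →₀ M => ‖g σ‖)
  obtain ⟨s₀, hs₀⟩ := (htail.eventually (gt_mem_nhds hε)).exists
  have hTlarge : ∀ᶠ T : Finset ι in Filter.atTop, s₀.biUnion Finsupp.support ⊆ T :=
    Filter.eventually_ge_atTop _
  refine hTlarge.mono fun T hT => ?_
  set s : Set (ι →₀ M) := {σ | σ.support ⊆ T} with hsdef
  have hsplit : ∑' σ : s, g σ.1 + ∑' σ : ↑sᶜ, g σ.1 = ∑' σ, g σ :=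
    hgs.tsum_subtype_add_tsum_subtype_compl s
  have hST : (∑' σ : {σ : ι →₀ M // σ.support ⊆ T}, g σ.1) = ∑' σ : s, g σ.1 := rfl
  rw [hST, dist_eq_norm]
  have heq : (∑' σ : s, g σ.1) - (∑' σ, g σ) = -(∑' σ : ↑sᶜ, g σ.1) := by
    rw [← hsplit]; ring
  rw [heq, norm_neg]
  have hle : ‖∑' σ : ↑sᶜ, g σ.1‖ ≤ ∑' σ : ↑sᶜ, ‖g σ.1‖ :=
    norm_tsum_le_tsum_norm (hg.subtype _)
  have hinj : ∀ x : ↑sᶜ, x.1 ∉ s₀ := by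
    intro x hx
    exact x.2 (fun y hy => hT (Finset.mem_biUnion.2 ⟨x.1, hx, hy⟩))
  have hle2 : (∑' σ : ↑sᶜ, ‖g σ.1‖) ≤ ∑' σ : {σ : ι →₀ M // σ ∉ s₀}, ‖g σ.1‖ := by
    refine Summable.tsum_le_tsum_of_inj (fun x => ⟨x.1, hinj x⟩)
      (fun x y hxy => Subtype.ext (by
        have h2 := congrArg (fun t : {σ : ι →₀ M // σ ∉ s₀} => t.1) hxy
        exact h2))
      (fun c _ => norm_nonneg _) (fun b => le_refl _) (hg.subtype _) (hg.subtype _)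
  exact lt_of_le_of_lt (hle.trans hle2) hs₀

end Analytic

section Final

variable {k : ℕ}

open scoped Classical in
noncomputable def THset (H : Fin k → Polynomial F) : Finset (MIr F) :=
  Finset.univ.biUnion fun i =>
    (normalizedFactors (H i)).toFinset.subtype (fun q => q.Monic ∧ Irreducible q)

lemma nuP_eq_zero_of_not_mem_THset {H : Fin k → Polynomial F} {P : MIr F}
    (hP : P ∉ THset (F := F) H) (i : Fin k) : nuP F P.1 (H i) = 0 := by
  classical
  by_contra h
  refine hP (Finset.mem_biUnion.2 ⟨i, Finset.mem_univ i, ?_⟩)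
  exact Finset.mem_subtype.2 (Multiset.mem_toFinset.2 (Multiset.count_ne_zero.1 (by simpa [nuP] using h)))

lemma mem_THset_of_nuP_ne_zero {H : Fin k → Polynomial F} {P : MIr F} {i : Fin k}
    (h : nuP F P.1 (H i) ≠ 0) : P ∈ THset (F := F) H := by
  by_contra hP
  exact h (nuP_eq_zero_of_not_mem_THset hP i)

def shiftEquiv (ν : Fin k → ℕ) : (Fin k → ℕ) ≃ {e : Fin k → ℕ // ∀ i, ν i ≤ e i} where
  toFun e := ⟨fun i => e i + ν i, fun i => Nat.le_add_left _ _⟩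
  invFun e' := fun i => e'.1 i - ν i
  left_inv e := funext fun i => by simp
  right_inv e' := Subtype.ext (funext fun i => Nat.sub_add_cancel (e'.2 i))

noncomputable def locC (f : (Fin k → Polynomial F) → ℂ) (H : Fin k → Polynomial F)
    (P : MIr F) (e : Fin k → ℕ) : ℂ :=
  muConv F f (fun i => P.1 ^ (e i + nuP F P.1 (H i))) /
    (anorm F P.1 : ℂ) ^ (∑ i, (e i + nuP F P.1 (H i)))

open scoped Classical in
noncomputable def bigPi (f : (Fin k → Polynomial F) → ℂ) (H : Fin k → Polynomial F)
    (σ : MIr F →₀ (Fin k → ℕ)) : ℂ :=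
  ∏ P ∈ σ.support ∪ THset (F := F) H, locC (F := F) f H P (σ P)

lemma locC_zero (f : (Fin k → Polynomial F) → ℂ) (H : Fin k → Polynomial F)
    (h1 : f (fun _ => 1) = 1) {P : MIr F} (hP : P ∉ THset (F := F) H) :
    locC (F := F) f H P 0 = 1 := by
  have hν : ∀ i, nuP F P.1 (H i) = 0 := nuP_eq_zero_of_not_mem_THset hP
  have harg : (fun i => P.1 ^ ((0 : Fin k → ℕ) i + nuP F P.1 (H i))) =
      (fun _ : Fin k => (1 : Polynomial F)) := by
    funext i
    rw [hν i]
    simp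
  rw [locC, harg, muConv_one f, h1]
  have hexp : (∑ i, ((0 : Fin k → ℕ) i + nuP F P.1 (H i))) = 0 := by
    refine Finset.sum_eq_zero fun i _ => ?_
    rw [hν i]
    simp
  rw [hexp, pow_zero, div_one]

lemma bigPi_eq_term (f : (Fin k → Polynomial F) → ℂ)
    (hmul : ∀ G H : Fin k → Polynomial F, (∀ i, (G i).Monic) → (∀ i, (H i).Monic) →
      IsCoprime (∏ i, G i) (∏ i, H i) → f (fun i => G i * H i) = f G * f H)
    (h1 : f (fun _ => 1) = 1)
    {H : Fin k → Polynomial F} (hH : ∀ i, (H i).Monic)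
    {M : Fin k → Polynomial F} (hM : ∀ i, (M i).Monic) :
    muConv F f (fun i => M i * H i) / ∏ i, (anorm F (M i * H i) : ℂ) =
      bigPi (F := F) f H (expOf (F := F) M) := by
  classical
  have hS : ∀ (P : MIr F) (i : Fin k), nuP F P.1 (M i * H i) ≠ 0 →
      P ∈ (expOf (F := F) M).support ∪ THset (F := F) H := by
    intro P i h
    rw [nuP_mul P.1 (hM i).ne_zero (hH i).ne_zero] at h
    by_cases hM0 : nuP F P.1 (M i) = 0
    · refine Finset.mem_union_right _ (mem_THset_of_nuP_ne_zero (i := i) ?_)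
      intro hH0
      exact h (by rw [hM0, hH0])
    · refine Finset.mem_union_left _ (Finsupp.mem_support_iff.2 ?_)
      exact Function.ne_iff.2 ⟨i, hM0⟩
  have ht : muConv F f (fun i => M i * H i) / ∏ i, (anorm F (M i * H i) : ℂ) =
      ∏ P ∈ (expOf (F := F) M).support ∪ THset (F := F) H,
        (muConv F f (fun i => P.1 ^ nuP F P.1 (M i * H i)) /
          (anorm F P.1 : ℂ) ^ (∑ i, nuP F P.1 (M i * H i))) :=
    term_euler f hmul h1 (fun i => (hM i).mul (hH i)) _ hS
  rw [ht, bigPi]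
  refine Finset.prod_congr rfl fun P hP => ?_
  have hν : ∀ i, nuP F P.1 (M i * H i) = expOf (F := F) M P i + nuP F P.1 (H i) :=
    fun i => nuP_mul P.1 (hM i).ne_zero (hH i).ne_zero
  rw [locC]
  congr 1
  · congr 1
    funext i
    rw [hν i]
  · congr 1
    exact Finset.sum_congr rfl fun i _ => hν i

end Final

variable (F)

/-- For a multiplicative `k`-variable arithmetic function `f` whose convolution `μ_k ∗ f`
satisfies `Σ |(μ_k∗f)(G₁,…,G_k)|/(|G₁|⋯|G_k|) < ∞`, the Ramanujan coefficient
`C_{H₁,…,H_k}` factors as an Euler product of local sums over exponents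
`e_i ≥ ν_P(H_i)`. -/
theorem coefficient_euler_product (k : ℕ) (hk : 1 ≤ k)
    (f : (Fin k → Polynomial F) → ℂ)
    (hne : ∃ G : Fin k → Polynomial F, (∀ i, (G i).Monic) ∧ f G ≠ 0)
    (hmul : ∀ G H : Fin k → Polynomial F, (∀ i, (G i).Monic) → (∀ i, (H i).Monic) →
      IsCoprime (∏ i, G i) (∏ i, H i) → f (fun i => G i * H i) = f G * f H)
    (hsum : Summable (fun G : {G : Fin k → Polynomial F // ∀ i, (G i).Monic} =>
      ‖muConv F f G.1‖ / ∏ i, (anorm F (G.1 i) : ℝ)))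
    (H : Fin k → Polynomial F) (hH : ∀ i, (H i).Monic) :
    (∑' M : {M : Fin k → Polynomial F // ∀ i, (M i).Monic},
        muConv F f (fun i => M.1 i * H i) / ∏ i, (anorm F (M.1 i * H i) : ℂ)) =
      ∏' P : {P : Polynomial F // P.Monic ∧ Irreducible P},
        ∑' e : {e : Fin k → ℕ // ∀ i, nuP F P.1 (H i) ≤ e i},
          muConv F f (fun i => P.1 ^ e.1 i) / (anorm F P.1 : ℂ) ^ (∑ i, e.1 i) := by
  classical
  -- Step 0: f(1) = 1
  have h1 : f (fun _ => 1) = 1 := by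
    obtain ⟨G0, hG0m, hG0⟩ := hne
    have hcop : IsCoprime (∏ i, G0 i) (∏ _i : Fin k, (1 : Polynomial F)) := by
      rw [Finset.prod_const_one]
      exact isCoprime_one_right
    have hm := hmul G0 (fun _ => 1) hG0m (fun _ => monic_one) hcop
    have hG01 : (fun i => G0 i * 1) = G0 := funext fun i => mul_one _
    rw [hG01] at hm
    exact (mul_left_cancel₀ hG0 (by rw [← hm, mul_one] :
      f G0 * 1 = f G0 * f (fun _ => 1))).symm
  -- Step 1: local summability of locC
  have hc : ∀ P : MIr F, Summable fun e : Fin k → ℕ => ‖locC (F := F) f H P e‖ := by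
    intro P
    have hdeg : P.1.natDegree ≠ 0 := by
      intro h0
      have hP1 : P.1 = 1 := P.2.1.natDegree_eq_zero.1 h0
      exact P.2.2.not_isUnit (hP1 ▸ isUnit_one)
    have hχinj : Function.Injective (fun e : Fin k → ℕ =>
        (⟨fun i => P.1 ^ (e i + nuP F P.1 (H i)), fun i => P.2.1.pow _⟩ :
          {G : Fin k → Polynomial F // ∀ i, (G i).Monic})) := by
      intro e e' h
      funext i
      have h2 : P.1 ^ (e i + nuP F P.1 (H i)) = P.1 ^ (e' i + nuP F P.1 (H i)) :=
        congrFun (congrArg Subtype.val h) i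
      have h3 := congrArg Polynomial.natDegree h2
      rw [Polynomial.natDegree_pow, Polynomial.natDegree_pow] at h3
      have h4 := Nat.eq_of_mul_eq_mul_right (Nat.pos_of_ne_zero hdeg) h3
      omega
    have hsum2 := hsum.comp_injective hχinj
    refine (summable_congr fun e => ?_).2 hsum2
    simp only [Function.comp]
    rw [locC, norm_div, norm_pow, Complex.norm_natCast]
    congr 1
    rw [← Finset.prod_pow_eq_pow_sum]
    refine Finset.prod_congr rfl fun i _ => ?_
    rw [anorm_pow]
    push_cast
    ring
  -- Step 2: global summability via the factorization bijection
  have hψinj : Function.Injective (fun M : {M : Fin k → Polynomial F // ∀ i, (M i).Monic} =>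
      (⟨fun i => M.1 i * H i, fun i => (M.2 i).mul (hH i)⟩ :
        {G : Fin k → Polynomial F // ∀ i, (G i).Monic})) := by
    intro M M' h
    refine Subtype.ext (funext fun i => ?_)
    exact mul_right_cancel₀ (hH i).ne_zero (congrFun (congrArg Subtype.val h) i)
  have hWψ := hsum.comp_injective hψinj
  have haM : ∀ M : {M : Fin k → Polynomial F // ∀ i, (M i).Monic},
      ‖muConv F f (fun i => M.1 i * H i) / ∏ i, (anorm F (M.1 i * H i) : ℂ)‖ =
        ‖muConv F f (fun i => M.1 i * H i)‖ / ∏ i, (anorm F (M.1 i * H i) : ℝ) := by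
    intro M
    rw [norm_div]
    congr 1
    rw [norm_prod]
    exact Finset.prod_congr rfl fun i _ => Complex.norm_natCast _
  have ha : Summable (fun M : {M : Fin k → Polynomial F // ∀ i, (M i).Monic} =>
      ‖muConv F f (fun i => M.1 i * H i) / ∏ i, (anorm F (M.1 i * H i) : ℂ)‖) := by
    refine (summable_congr fun M => ?_).2 hWψ
    rw [haM M]
    rfl
  have hPia : ∀ σ : MIr F →₀ (Fin k → ℕ),
      bigPi (F := F) f H σ =
        muConv F f (fun i => ((monicEquiv (F := F)).symm σ).1 i * H i) /
          ∏ i, (anorm F (((monicEquiv (F := F)).symm σ).1 i * H i) : ℂ) := by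
    intro σ
    have h := bigPi_eq_term (F := F) f hmul h1 hH ((monicEquiv (F := F)).symm σ).2
    have hexp : expOf (F := F) ((monicEquiv (F := F)).symm σ).1 = σ :=
      (monicEquiv (F := F)).apply_symm_apply σ
    rw [hexp] at h
    exact h.symm
  have hPin : Summable (fun σ : MIr F →₀ (Fin k → ℕ) => ‖bigPi (F := F) f H σ‖) := by
    have h2 := ((monicEquiv (F := F) (k := k)).symm.summable_iff
      (f := fun M : {M : Fin k → Polynomial F // ∀ i, (M i).Monic} =>
        ‖muConv F f (fun i => M.1 i * H i) / ∏ i, (anorm F (M.1 i * H i) : ℂ)‖)).2 ha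
    refine (summable_congr fun σ => ?_).2 h2
    simp only [Function.comp]
    rw [hPia σ]
  -- Step 3: LHS equals the total sum over finsupps
  have hLHS : (∑' M : {M : Fin k → Polynomial F // ∀ i, (M i).Monic},
        muConv F f (fun i => M.1 i * H i) / ∏ i, (anorm F (M.1 i * H i) : ℂ)) =
      ∑' σ : MIr F →₀ (Fin k → ℕ), bigPi (F := F) f H σ := by
    rw [← Equiv.tsum_eq (monicEquiv (F := F) (k := k)).symm
      (fun M : {M : Fin k → Polynomial F // ∀ i, (M i).Monic} =>
        muConv F f (fun i => M.1 i * H i) / ∏ i, (anorm F (M.1 i * H i) : ℂ))]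
    exact (tsum_congr fun σ => hPia σ).symm
  -- Step 4: the Euler product
  have hprod : HasProd (fun P : MIr F => ∑' e : Fin k → ℕ, locC (F := F) f H P e)
      (∑' σ : MIr F →₀ (Fin k → ℕ), bigPi (F := F) f H σ) := by
    have htend := tendsto_tsum_finsupp_subsets (bigPi (F := F) f H) hPin
    have hev : (fun T : Finset (MIr F) =>
          ∑' σ : {σ : MIr F →₀ (Fin k → ℕ) // σ.support ⊆ T}, bigPi (F := F) f H σ.1)
        =ᶠ[Filter.atTop] (fun T : Finset (MIr F) =>
          ∏ P ∈ T, ∑' e : Fin k → ℕ, locC (F := F) f H P e) := by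
      filter_upwards [Filter.eventually_ge_atTop (THset (F := F) H)] with T hT
      rw [(prod_tsum_eq_tsum_finsupp (locC (F := F) f H) hc T).2]
      refine tsum_congr fun σ => ?_
      rw [bigPi]
      refine Finset.prod_subset (Finset.union_subset σ.2 hT) fun P hPT hPn => ?_
      have hP0 : σ.1 P = 0 :=
        Finsupp.notMem_support_iff.1 fun h => hPn (Finset.mem_union_left _ h)
      have hPTH : P ∉ THset (F := F) H := fun h => hPn (Finset.mem_union_right _ h)
      rw [hP0, locC_zero (F := F) f H h1 hPTH]
    exact Filter.Tendsto.congr' hev htend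
  rw [hLHS, ← hprod.tprod_eq]
  refine tprod_congr fun P => ?_
  rw [← Equiv.tsum_eq (shiftEquiv (fun i => nuP F P.1 (H i)))
    (fun e' : {e : Fin k → ℕ // ∀ i, nuP F P.1 (H i) ≤ e i} =>
      muConv F f (fun i => P.1 ^ e'.1 i) / (anorm F P.1 : ℂ) ^ (∑ i, e'.1 i))]
  exact tsum_congr fun e => by rw [locC]; rfl
end
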